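/- arXiv:1910.08551 — 7 statements merged into one kernel-verified Lean document; each statement's English description precedes it below -/
import Mathlib

section
/- In the BMW algebra W_n(q,μ), setting σ'_i := σ_i − (q − q^{-1})·1, one has σ'_i κ_{i+1} σ'_i = σ'_{i+1} κ_i σ'_{i+1}. -/
theorem bmw_aux {A : Type*} [Ring A] [Algebra ℂ A] (d μ : ℂ)
    (hd : d ≠ 0) (hμ0 : μ ≠ 0)
    (a b ai bi ea eb : A)
    (ha1 : a * ai = 1) (ha2 : ai * a = 1)
    (hb1 : b * bi = 1) (hb2 : bi * b = 1)
    (h1a : (μ * d) • ea = 1 + d • a - a * a)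
    (h1b : (μ * d) • eb = 1 + d • b - b * b)
    (hbr : a * b * a = b * a * b)
    (hsa1 : a * ea = μ • ea) (hsa2 : ea * a = μ • ea)
    (hsb1 : b * eb = μ • eb) (hsb2 : eb * b = μ • eb)
    (h31 : ea * (b * ea) = μ⁻¹ • ea)
    (h32 : ea * (bi * ea) = μ • ea)
    (h33 : eb * (a * eb) = μ⁻¹ • eb)
    (h34 : eb * (ai * eb) = μ • eb) :
    (a - d • 1) * eb * (a - d • 1) = (b - d • 1) * ea * (b - d • 1) := by
  have hμd : μ * d ≠ 0 := mul_ne_zero hμ0 hd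
  -- cancel a nonzero scalar
  have cancel : ∀ (c : ℂ), c ≠ 0 → ∀ x y : A, c • x = c • y → x = y := by
    intro c hc x y h
    have := congrArg (fun z => c⁻¹ • z) h
    simpa [smul_smul, inv_mul_cancel₀ hc] using this
  -- A: ai = a - d•1 + d•ea
  have haA : ai = a - d • 1 + d • ea := by
    have key : a * (a - d • 1 + d • ea) = 1 := by
      have expand : a * (a - d • 1 + d • ea) = a * a - d • a + d • (a * ea) := by
        simp [mul_add, mul_sub, mul_smul_comm]
      rw [expand, hsa1]
      have haa : a * a = 1 + d • a - (μ * d) • ea := by rw [h1a]; abel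
      rw [haa, smul_smul]
      module
    calc ai = ai * (a * (a - d • 1 + d • ea)) := by rw [key, mul_one]
      _ = (ai * a) * (a - d • 1 + d • ea) := by rw [mul_assoc]
      _ = a - d • 1 + d • ea := by rw [ha2, one_mul]
  have hbA : bi = b - d • 1 + d • eb := by
    have key : b * (b - d • 1 + d • eb) = 1 := by
      have expand : b * (b - d • 1 + d • eb) = b * b - d • b + d • (b * eb) := by
        simp [mul_add, mul_sub, mul_smul_comm]
      rw [expand, hsb1]
      have hbb : b * b = 1 + d • b - (μ * d) • eb := by rw [h1b]; abel
      rw [hbb, smul_smul]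
      module
    calc bi = bi * (b * (b - d • 1 + d • eb)) := by rw [key, mul_one]
      _ = (bi * b) * (b - d • 1 + d • eb) := by rw [mul_assoc]
      _ = b - d • 1 + d • eb := by rw [hb2, one_mul]
  -- ea * ea
  have hee : ea * ea = ((1 + d * μ - μ * μ) * (μ * d)⁻¹) • ea := by
    apply cancel _ hμd
    calc (μ * d) • (ea * ea) = ea * ((μ * d) • ea) := (mul_smul_comm _ _ _).symm
      _ = ea * (1 + d • a - a * a) := by rw [h1a]
      _ = ea + d • (ea * a) - ea * a * a := by
          simp [mul_add, mul_sub, mul_smul_comm, mul_assoc]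
      _ = (1 + d * μ - μ * μ) • ea := by
          rw [hsa2, smul_mul_assoc, hsa2]; module
      _ = (μ * d) • (((1 + d * μ - μ * μ) * (μ * d)⁻¹) • ea) := by
          rw [smul_smul]
          congr 1
          field_simp
  -- B: ea * eb * ea = ea
  have hB : ea * eb * ea = ea := by
    apply cancel d hd
    have expand : ea * (bi * ea) = ea * (b * ea)
        - d • (((1 + d * μ - μ * μ) * (μ * d)⁻¹) • ea) + d • (ea * eb * ea) := by
      rw [hbA]
      simp only [add_mul, sub_mul, mul_add, mul_sub, smul_mul_assoc, mul_smul_comm,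
        mul_assoc, mul_one, one_mul]
      rw [← mul_assoc ea eb ea, hee]
      module
    rw [h32, h31] at expand
    have h2 : d • (ea * eb * ea) = μ • ea - μ⁻¹ • ea
        + d • (((1 + d * μ - μ * μ) * (μ * d)⁻¹) • ea) := by
      rw [expand]; abel
    rw [h2, smul_smul]
    match_scalars
    field_simp
    ring
  -- braid corollaries
  have hbr0 : a * (b * a) = b * (a * b) := by
    simpa [mul_assoc] using hbr
  have hbr1 : a * (b * (a * a)) = b * (b * (a * b)) := by
    calc a * (b * (a * a)) = (a * b * a) * a := by simp [mul_assoc]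
      _ = (b * a * b) * a := by rw [hbr]
      _ = b * (a * b * a) := by simp [mul_assoc]
      _ = b * (b * a * b) := by rw [hbr]
      _ = b * (b * (a * b)) := by simp [mul_assoc]
  have hbr2 : b * (a * (b * b)) = a * (a * (b * a)) := by
    calc b * (a * (b * b)) = (b * a * b) * b := by simp [mul_assoc]
      _ = (a * b * a) * b := by rw [← hbr]
      _ = a * (b * a * b) := by simp [mul_assoc]
      _ = a * (a * b * a) := by rw [← hbr]
      _ = a * (a * (b * a)) := by simp [mul_assoc]
  -- C2 : a*b*ea = eb*(a*b)
  have hC2 : a * b * ea = eb * (a * b) := by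
    apply cancel _ hμd
    calc (μ * d) • (a * b * ea) = a * (b * ((μ * d) • ea)) := by
          simp [mul_smul_comm, mul_assoc]
      _ = a * (b * (1 + d • a - a * a)) := by rw [h1a]
      _ = a * b + d • (a * (b * a)) - a * (b * (a * a)) := by
          simp [mul_add, mul_sub, mul_smul_comm, mul_assoc]
      _ = a * b + d • (b * (a * b)) - b * (b * (a * b)) := by rw [hbr0, hbr1]
      _ = (1 + d • b - b * b) * (a * b) := by
          simp [add_mul, sub_mul, smul_mul_assoc, mul_assoc]
      _ = (μ * d) • (eb * (a * b)) := by rw [← h1b, smul_mul_assoc]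
  -- C1 : b*a*eb = ea*(b*a)
  have hC1 : b * a * eb = ea * (b * a) := by
    apply cancel _ hμd
    calc (μ * d) • (b * a * eb) = b * (a * ((μ * d) • eb)) := by
          simp [mul_smul_comm, mul_assoc]
      _ = b * (a * (1 + d • b - b * b)) := by rw [h1b]
      _ = b * a + d • (b * (a * b)) - b * (a * (b * b)) := by
          simp [mul_add, mul_sub, mul_smul_comm, mul_assoc]
      _ = b * a + d • (a * (b * a)) - a * (a * (b * a)) := by rw [← hbr0, hbr2]
      _ = (1 + d • a - a * a) * (b * a) := by
          simp [add_mul, sub_mul, smul_mul_assoc, mul_assoc]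
      _ = (μ * d) • (ea * (b * a)) := by rw [← h1a, smul_mul_assoc]
  -- D1 : ai*eb = b*(ea*eb)
  have hD1 : ai * eb = b * (ea * eb) := by
    have step1 : a * (b * (ea * eb)) = eb := by
      calc a * (b * (ea * eb)) = (a * b * ea) * eb := by simp [mul_assoc]
        _ = (eb * (a * b)) * eb := by rw [hC2]
        _ = eb * (a * (b * eb)) := by simp [mul_assoc]
        _ = eb * (a * (μ • eb)) := by rw [hsb1]
        _ = μ • (eb * (a * eb)) := by simp [mul_smul_comm]
        _ = μ • (μ⁻¹ • eb) := by rw [h33]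
        _ = eb := by rw [smul_smul, mul_inv_cancel₀ hμ0, one_smul]
    calc ai * eb = ai * (a * (b * (ea * eb))) := by rw [step1]
      _ = (ai * a) * (b * (ea * eb)) := by simp [mul_assoc]
      _ = b * (ea * eb) := by rw [ha2, one_mul]
  -- D2 : eb*ai = eb*(ea*b)
  have hD2 : eb * ai = eb * (ea * b) := by
    have step2 : (eb * (ea * b)) * a = eb := by
      calc (eb * (ea * b)) * a = eb * (ea * (b * a)) := by simp [mul_assoc]
        _ = eb * (b * a * eb) := by rw [← hC1]
        _ = (eb * b) * (a * eb) := by simp [mul_assoc]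
        _ = μ • (eb * (a * eb)) := by rw [hsb2, smul_mul_assoc]
        _ = μ • (μ⁻¹ • eb) := by rw [h33]
        _ = eb := by rw [smul_smul, mul_inv_cancel₀ hμ0, one_smul]
    calc eb * ai = ((eb * (ea * b)) * a) * ai := by rw [step2]
      _ = (eb * (ea * b)) * (a * ai) := by rw [mul_assoc]
      _ = eb * (ea * b) := by rw [ha1, mul_one]
  -- assembled pieces
  have p1 : ai * (eb * ai) = b * (ea * b) := by
    calc ai * (eb * ai) = ai * (eb * (ea * b)) := by rw [hD2]
      _ = (ai * eb) * (ea * b) := by simp [mul_assoc]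
      _ = (b * (ea * eb)) * (ea * b) := by rw [hD1]
      _ = b * ((ea * eb * ea) * b) := by simp [mul_assoc]
      _ = b * (ea * b) := by rw [hB]
  have p2 : ea * (eb * ai) = ea * b := by
    calc ea * (eb * ai) = ea * (eb * (ea * b)) := by rw [hD2]
      _ = (ea * eb * ea) * b := by simp [mul_assoc]
      _ = ea * b := by rw [hB]
  have p3 : ai * (eb * ea) = b * ea := by
    calc ai * (eb * ea) = (ai * eb) * ea := by simp [mul_assoc]
      _ = (b * (ea * eb)) * ea := by rw [hD1]
      _ = b * (ea * eb * ea) := by simp [mul_assoc]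
      _ = b * ea := by rw [hB]
  have p4 : ea * (eb * ea) = ea := by simpa [mul_assoc] using hB
  -- final assembly
  have hswap : a - d • (1 : A) = ai - d • ea := by rw [haA]; abel
  have lhs_eq : (ai - d • ea) * eb * (ai - d • ea)
      = b * (ea * b) - d • (ea * b) - d • (b * ea) + (d * d) • ea := by
    simp only [sub_mul, mul_sub, smul_mul_assoc, mul_smul_comm, smul_smul, mul_assoc]
    rw [p1, p2, p3, p4]
    module
  have rhs_eq : (b - d • (1 : A)) * ea * (b - d • (1 : A))
      = b * (ea * b) - d • (ea * b) - d • (b * ea) + (d * d) • ea := by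
    simp only [sub_mul, mul_sub, smul_mul_assoc, mul_smul_comm, smul_smul, mul_assoc,
      mul_one, one_mul]
    module
  rw [hswap, lhs_eq, rhs_eq]
/-- In the BMW algebra, with σ'_i = σ_i - (q-q⁻¹)·1, one has σ'_i κ_{i+1} σ'_i = σ'_{i+1} κ_i σ'_{i+1}. -/
theorem bmw_sigma_prime_kappa
    {A : Type*} [Ring A] [Algebra ℂ A] (n : ℕ) (q μ : ℂ)
    (hq0 : q ≠ 0) (hq1 : q ≠ 1) (hq2 : q ≠ -1)
    (hμ0 : μ ≠ 0) (hμ1 : μ ≠ q) (hμ2 : μ ≠ -q⁻¹)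
    (σ σinv : ℕ → A) (κ : ℕ → A)
    (hinv : ∀ i, 1 ≤ i → i ≤ n - 1 → σ i * σinv i = 1 ∧ σinv i * σ i = 1)
    (hκ : ∀ i, 1 ≤ i → i ≤ n - 1 →
      κ i = (μ * (q - q⁻¹))⁻¹ • ((q • (1 : A) - σ i) * (q⁻¹ • (1 : A) + σ i)))
    (hbraid : ∀ i, 1 ≤ i → i + 1 ≤ n - 1 →
      σ i * σ (i + 1) * σ i = σ (i + 1) * σ i * σ (i + 1))
    (hfar : ∀ i j, 1 ≤ i → 1 ≤ j → i ≤ n - 1 → j ≤ n - 1 → i + 1 < j →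
      σ i * σ j = σ j * σ i)
    (hκσ : ∀ i, 1 ≤ i → i ≤ n - 1 →
      σ i * κ i = μ • κ i ∧ κ i * σ i = μ • κ i)
    (hκσκ : ∀ i, 1 ≤ i → i + 1 ≤ n - 1 →
      κ i * (σ (i + 1) * κ i) = μ⁻¹ • κ i ∧
      κ i * (σinv (i + 1) * κ i) = μ • κ i ∧
      κ (i + 1) * (σ i * κ (i + 1)) = μ⁻¹ • κ (i + 1) ∧
      κ (i + 1) * (σinv i * κ (i + 1)) = μ • κ (i + 1)) :
    ∀ i, 1 ≤ i → i + 1 ≤ n - 1 →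
      (σ i - (q - q⁻¹) • (1 : A)) * κ (i + 1) * (σ i - (q - q⁻¹) • (1 : A)) =
      (σ (i + 1) - (q - q⁻¹) • (1 : A)) * κ i * (σ (i + 1) - (q - q⁻¹) • (1 : A)) := by
  have hδ : q - q⁻¹ ≠ 0 := by
    rw [sub_ne_zero]
    intro h
    have h2 : q * q = 1 := by nth_rewrite 2 [h]; exact mul_inv_cancel₀ hq0
    have h3 : (q - 1) * (q + 1) = 0 := by linear_combination h2
    rcases mul_eq_zero.mp h3 with h4 | h4
    · exact hq1 (sub_eq_zero.mp h4)
    · exact hq2 (eq_neg_of_add_eq_zero_left h4)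
  have hμδ : μ * (q - q⁻¹) ≠ 0 := mul_ne_zero hμ0 hδ
  have h1 : ∀ j, 1 ≤ j → j ≤ n - 1 →
      (μ * (q - q⁻¹)) • κ j = 1 + (q - q⁻¹) • σ j - σ j * σ j := by
    intro j hj1 hj2
    rw [hκ j hj1 hj2, smul_smul, mul_inv_cancel₀ hμδ, one_smul]
    simp only [sub_mul, mul_add, smul_mul_assoc, mul_smul_comm, smul_smul, mul_one, one_mul]
    match_scalars <;> field_simp <;> ring
  intro i hi1 hi2
  have hi : i ≤ n - 1 := le_trans (Nat.le_succ i) hi2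
  have hi1' : 1 ≤ i + 1 := Nat.le_succ_of_le hi1
  obtain ⟨ha1, ha2⟩ := hinv i hi1 hi
  obtain ⟨hb1, hb2⟩ := hinv (i + 1) hi1' hi2
  obtain ⟨hsa1, hsa2⟩ := hκσ i hi1 hi
  obtain ⟨hsb1, hsb2⟩ := hκσ (i + 1) hi1' hi2
  obtain ⟨h31, h32, h33, h34⟩ := hκσκ i hi1 hi2
  exact bmw_aux (q - q⁻¹) μ hδ hμ0 (σ i) (σ (i + 1)) (σinv i) (σinv (i + 1))
    (κ i) (κ (i + 1)) ha1 ha2 hb1 hb2 (h1 i hi1 hi) (h1 (i + 1) hi1' hi2)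
    (hbraid i hi1 hi2) hsa1 hsa2 hsb1 hsb2 h31 h32 h33 h34
end

section
/- In the BMW algebra, κ_{i+1} κ_{i−1} κ_i σ_{i−1} = κ_{i+1} κ_{i−1} κ_i σ_{i+1}, i.e. the product κ_{i+1} κ_{i−1} κ_i is unchanged when right-multiplied by σ_{i−1} versus σ_{i+1}. -/
/-- In the BMW algebra, `κ_{i+1} κ_{i-1} κ_i σ_{i-1} = κ_{i+1} κ_{i-1} κ_i σ_{i+1}`. -/
theorem bmw_kappa_triple_sigma
    {A : Type*} [Ring A] (n : ℕ) (σ σinv κ : ℕ → A)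
    (hinv : ∀ i, 1 ≤ i → i ≤ n - 1 → σ i * σinv i = 1 ∧ σinv i * σ i = 1)
    (hks : ∀ i, 1 ≤ i → i + 1 ≤ n - 1 →
      κ i * σ (i + 1) = κ i * κ (i + 1) * σinv i ∧
      κ (i + 1) * σ i = κ (i + 1) * κ i * σinv (i + 1) ∧
      σ (i + 1) * κ i = σinv i * (κ (i + 1) * κ i) ∧
      σ i * κ (i + 1) = σinv (i + 1) * (κ i * κ (i + 1)))
    (hkkk : ∀ i, 1 ≤ i → i + 1 ≤ n - 1 →
      κ i * κ (i + 1) * κ i = κ i ∧ κ (i + 1) * κ i * κ (i + 1) = κ (i + 1))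
    (hfar : ∀ i j, 1 ≤ i → i + 1 < j → j ≤ n - 1 → κ i * κ j = κ j * κ i) :
    ∀ i, 2 ≤ i → i + 1 ≤ n - 1 →
      κ (i + 1) * κ (i - 1) * κ i * σ (i - 1) =
      κ (i + 1) * κ (i - 1) * κ i * σ (i + 1) := by
  intro i hi hn
  obtain ⟨j, rfl⟩ : ∃ j, i = j + 1 := ⟨i - 1, by omega⟩
  have hj : 1 ≤ j := by omega
  have hjn : j + 1 ≤ n - 1 := by omega
  simp only [Nat.add_sub_cancel]
  have h1 : κ (j + 1) * σ j = κ (j + 1) * κ j * σinv (j + 1) :=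
    (hks j hj hjn).2.1
  have h2 : κ j * κ (j + 1) * κ j = κ j := (hkkk j hj hjn).1
  have h3 : κ (j + 1) * σ (j + 1 + 1) = κ (j + 1) * κ (j + 1 + 1) * σinv (j + 1) :=
    (hks (j + 1) (by omega) hn).1
  have h4 : κ (j + 1 + 1) * κ (j + 1) * κ (j + 1 + 1) = κ (j + 1 + 1) :=
    (hkkk (j + 1) (by omega) hn).2
  have h5 : κ j * κ (j + 1 + 1) = κ (j + 1 + 1) * κ j :=
    hfar j (j + 1 + 1) hj (by omega) hn
  have keyL : κ (j + 1 + 1) * κ j * (κ (j + 1) * κ j) = κ (j + 1 + 1) * κ j := by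
    rw [mul_assoc (κ (j + 1 + 1)), ← mul_assoc (κ j), h2]
  have keyR : κ (j + 1 + 1) * κ j * (κ (j + 1) * κ (j + 1 + 1)) = κ (j + 1 + 1) * κ j := by
    rw [← h5, mul_assoc (κ j), ← mul_assoc (κ (j + 1 + 1)), h4]
  have L : κ (j + 1 + 1) * κ j * κ (j + 1) * σ j = κ (j + 1 + 1) * κ j * σinv (j + 1) := by
    rw [mul_assoc (κ (j + 1 + 1) * κ j), h1, ← mul_assoc, ← mul_assoc,
      mul_assoc (κ (j + 1 + 1) * κ j), keyL]
  have R : κ (j + 1 + 1) * κ j * κ (j + 1) * σ (j + 1 + 1)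
      = κ (j + 1 + 1) * κ j * σinv (j + 1) := by
    rw [mul_assoc (κ (j + 1 + 1) * κ j), h3, ← mul_assoc, ← mul_assoc,
      mul_assoc (κ (j + 1 + 1) * κ j), keyR]
  rw [L, R]
end

section
/- In the BMW algebra, κ_i κ_{i+1} κ_{i+2} σ_i = σ_{i+2} κ_i κ_{i+1} κ_{i+2}. -/
private lemma bmw_comm_inv {A : Type*} [Ring A] (x xinv y : A)
    (hr : x * xinv = 1) (hl : xinv * x = 1) (h : x * y = y * x) :
    xinv * y = y * xinv := by
  calc xinv * y = xinv * y * (x * xinv) := by rw [hr, mul_one]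
    _ = xinv * (y * x) * xinv := by noncomm_ring
    _ = xinv * (x * y) * xinv := by rw [h]
    _ = (xinv * x) * (y * xinv) := by noncomm_ring
    _ = y * xinv := by rw [hl, one_mul]

private lemma bmw_aux_s9 {A : Type*} [Ring A]
    (a b c ainv cinv e1 e2 e3 : A)
    (hcc : c * cinv = 1) (haa : ainv * a = 1)
    (hce1 : cinv * e1 = e1 * cinv)
    (hbe3 : b * e3 = cinv * (e2 * e3))
    (he1b : e1 * b = e1 * e2 * ainv)
    (hae3 : ainv * e3 = e3 * ainv) :
    e1 * e2 * e3 * a = c * (e1 * e2 * e3) := by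
  have key : cinv * (e1 * e2 * e3) = e1 * e2 * e3 * ainv := by
    calc cinv * (e1 * e2 * e3) = (cinv * e1) * (e2 * e3) := by noncomm_ring
      _ = e1 * (cinv * (e2 * e3)) := by rw [hce1]; noncomm_ring
      _ = e1 * (b * e3) := by rw [hbe3]
      _ = (e1 * b) * e3 := by rw [mul_assoc]
      _ = (e1 * e2 * ainv) * e3 := by rw [he1b]
      _ = e1 * e2 * (ainv * e3) := by rw [mul_assoc]
      _ = e1 * e2 * (e3 * ainv) := by rw [hae3]
      _ = e1 * e2 * e3 * ainv := by noncomm_ring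
  calc e1 * e2 * e3 * a = (c * cinv) * (e1 * e2 * e3) * a := by
        rw [hcc, one_mul]
    _ = c * (cinv * (e1 * e2 * e3)) * a := by noncomm_ring
    _ = c * (e1 * e2 * e3 * ainv) * a := by rw [key]
    _ = c * (e1 * e2 * e3) * (ainv * a) := by noncomm_ring
    _ = c * (e1 * e2 * e3) := by rw [haa, mul_one]

/-- In the BMW algebra, `κ_i κ_{i+1} κ_{i+2} σ_i = σ_{i+2} κ_i κ_{i+1} κ_{i+2}`. -/
theorem bmw_kappa_string_sigma
    {A : Type*} [Ring A] (n : ℕ) (σ σinv κ : ℕ → A)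
    (hinv : ∀ i, 1 ≤ i → i ≤ n - 1 → σ i * σinv i = 1 ∧ σinv i * σ i = 1)
    (hks : ∀ i, 1 ≤ i → i + 1 ≤ n - 1 →
      κ i * σ (i + 1) = κ i * κ (i + 1) * σinv i ∧
      κ (i + 1) * σ i = κ (i + 1) * κ i * σinv (i + 1) ∧
      σ (i + 1) * κ i = σinv i * (κ (i + 1) * κ i) ∧
      σ i * κ (i + 1) = σinv (i + 1) * (κ i * κ (i + 1)))
    (hfarκκ : ∀ i j, 1 ≤ i → i + 1 < j → j ≤ n - 1 → κ i * κ j = κ j * κ i)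
    (hfarσκ : ∀ i j, 1 ≤ i → 1 ≤ j → i ≤ n - 1 → j ≤ n - 1 →
      (i + 1 < j ∨ j + 1 < i) → σ i * κ j = κ j * σ i) :
    ∀ i, 1 ≤ i → i + 2 ≤ n - 1 →
      κ i * κ (i + 1) * κ (i + 2) * σ i =
      σ (i + 2) * (κ i * κ (i + 1) * κ (i + 2)) := by
  intro i h1 h2
  have hi : i ≤ n - 1 := by omega
  have hinv_i := hinv i h1 hi
  have hinv_i2 := hinv (i + 2) (by omega) h2
  have far_c : σ (i + 2) * κ i = κ i * σ (i + 2) :=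
    hfarσκ (i + 2) i (by omega) h1 h2 hi (Or.inr (by omega))
  have far_a : σ i * κ (i + 2) = κ (i + 2) * σ i :=
    hfarσκ i (i + 2) h1 (by omega) hi h2 (Or.inl (by omega))
  have far_cinv : σinv (i + 2) * κ i = κ i * σinv (i + 2) :=
    bmw_comm_inv _ _ _ hinv_i2.1 hinv_i2.2 far_c
  have far_ainv : σinv i * κ (i + 2) = κ (i + 2) * σinv i :=
    bmw_comm_inv _ _ _ hinv_i.1 hinv_i.2 far_a
  have hks_i := hks i h1 (by omega)
  have hks_i1 := hks (i + 1) (by omega) (by omega)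
  exact bmw_aux_s9 (σ i) (σ (i + 1)) (σ (i + 2)) (σinv i) (σinv (i + 2))
    (κ i) (κ (i + 1)) (κ (i + 2))
    hinv_i2.1 hinv_i.2 far_cinv hks_i1.2.2.2 hks_i.1 far_ainv
end

section
/- Let R ∈ End(V⊗V) be skew invertible with skew inverse Ψ (i.e. Tr₂(R₁₂ Ψ₂₃) = Tr₂(Ψ₁₂ R₂₃) = P₁₃), and let {X,F} be a compatible pair with X skew invertible and C_X := Tr₁(Ψ_X)₁₂. Then for any matrix M with entries in an algebra W, Tr₁( (C_X)₁ F₁₂^{ε} M₂ F₁₂^{−ε} ) = I₂ · tr(C_X M) for ε = ±1. -/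
noncomputable section
open Matrix BigOperators

/-- Operators on `V ⊗ V`, as matrices indexed by pairs. -/
abbrev TwoLeg (N : ℕ) (R : Type) := Matrix (Fin N × Fin N) (Fin N × Fin N) R

/-- Operators on `V ⊗ V ⊗ V`. -/
abbrev ThreeLeg (N : ℕ) (R : Type) :=
  Matrix (Fin N × Fin N × Fin N) (Fin N × Fin N × Fin N) R

variable {N : ℕ} {R : Type} [Ring R]

/-- `X₁₂` acting on legs 1,2 of three tensor factors. -/
def leg12 (X : TwoLeg N R) : ThreeLeg N R := fun p q =>
  X (p.1, p.2.1) (q.1, q.2.1) * (if p.2.2 = q.2.2 then 1 else 0)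

/-- `X₂₃` acting on legs 2,3. -/
def leg23 (X : TwoLeg N R) : ThreeLeg N R := fun p q =>
  X (p.2.1, p.2.2) (q.2.1, q.2.2) * (if p.1 = q.1 then 1 else 0)

/-- `X₁₃` acting on legs 1,3. -/
def leg13 (X : TwoLeg N R) : ThreeLeg N R := fun p q =>
  X (p.1, p.2.2) (q.1, q.2.2) * (if p.2.1 = q.2.1 then 1 else 0)

/-- Partial trace of a three-leg operator over the middle leg. -/
def ptrMid (Y : ThreeLeg N R) : TwoLeg N R := fun p q =>
  ∑ k : Fin N, Y (p.1, k, p.2) (q.1, k, q.2)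

/-- Partial trace of a two-leg operator over leg 1. -/
def trLeg1 (X : TwoLeg N R) : Matrix (Fin N) (Fin N) R := fun i j =>
  ∑ k : Fin N, X (k, i) (k, j)

/-- Partial trace of a two-leg operator over leg 2. -/
def trLeg2 (X : TwoLeg N R) : Matrix (Fin N) (Fin N) R := fun i j =>
  ∑ k : Fin N, X (i, k) (j, k)

/-- `C₁`: a one-leg operator acting on the first leg. -/
def leg1 (C : Matrix (Fin N) (Fin N) R) : TwoLeg N R := fun p q =>
  C p.1 q.1 * (if p.2 = q.2 then 1 else 0)

/-- `C₂`: a one-leg operator acting on the second leg. -/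
def leg2 (C : Matrix (Fin N) (Fin N) R) : TwoLeg N R := fun p q =>
  C p.2 q.2 * (if p.1 = q.1 then 1 else 0)

/-- The permutation operator `P₁₃` (on the two remaining legs). -/
def permP (N : ℕ) (R : Type) [Ring R] : TwoLeg N R := fun p q =>
  if p.1 = q.2 ∧ p.2 = q.1 then 1 else 0

/-- `X` is skew invertible with skew inverse `Ψ`:
`Tr₂(X₁₂ Ψ₂₃) = Tr₂(Ψ₁₂ X₂₃) = P₁₃`. -/
def IsSkewInverse (X Ψ : TwoLeg N R) : Prop :=
  ptrMid (leg12 X * leg23 Ψ) = permP N R ∧ ptrMid (leg12 Ψ * leg23 X) = permP N R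

/-- `{X,F}` is a compatible pair: `X₁F₂F₁ = F₂F₁X₂` and `X₂F₁F₂ = F₁F₂X₁`. -/
def IsCompatiblePair (X F : TwoLeg N R) : Prop :=
  leg12 X * leg23 F * leg12 F = leg23 F * leg12 F * leg23 X ∧
  leg23 X * leg12 F * leg23 F = leg12 F * leg23 F * leg12 X

/-- `X₂₁ = P X P`. -/
def swapLegs (X : TwoLeg N R) : TwoLeg N R := fun p q => X (p.2, p.1) (q.2, q.1)

end

open Matrix
namespace CPT
variable {N : ℕ} {S : Type} [CommRing S]

lemma ptrMid12_23 (A B : TwoLeg N S) (i j i' j' : Fin N) :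
    ptrMid (leg12 A * leg23 B) (i, j) (i', j') =
      ∑ k : Fin N, ∑ b : Fin N, A (i, k) (i', b) * B (b, j) (k, j') := by
  simp only [ptrMid, Matrix.mul_apply, leg12, leg23, Fintype.sum_prod_type]
  simp [mul_ite, ite_mul, mul_assoc]


lemma sum3_rev {A : Type*} [AddCommMonoid A] (h : Fin N → Fin N → Fin N → A) :
    ∑ x : Fin N, ∑ y : Fin N, ∑ z : Fin N, h z y x
      = ∑ x : Fin N, ∑ y : Fin N, ∑ z : Fin N, h x y z := by
  have s1 : ∀ x : Fin N, (∑ y : Fin N, ∑ z : Fin N, h z y x)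
      = ∑ z : Fin N, ∑ y : Fin N, h z y x := fun x => Finset.sum_comm
  simp_rw [s1]
  rw [Finset.sum_comm]
  exact Finset.sum_congr rfl fun z _ => Finset.sum_comm

lemma L121 (A B C : TwoLeg N S) (p q : Fin N × Fin N × Fin N) :
    (leg12 A * leg23 B * leg12 C) p q =
      ∑ a : Fin N, ∑ b : Fin N, ∑ c : Fin N,
        A (p.1, p.2.1) (a, b) * B (b, p.2.2) (c, q.2.2) * C (a, c) (q.1, q.2.1) := by
  simp only [Matrix.mul_apply, leg12, leg23, Fintype.sum_prod_type]
  simp [mul_ite, ite_mul, Finset.sum_mul, Finset.mul_sum, mul_assoc]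
  exact Finset.sum_congr rfl fun a _ => Finset.sum_comm

lemma L232 (A B C : TwoLeg N S) (p q : Fin N × Fin N × Fin N) :
    (leg23 A * leg12 B * leg23 C) p q =
      ∑ b : Fin N, ∑ c : Fin N, ∑ d : Fin N,
        A (p.2.1, p.2.2) (b, c) * B (p.1, b) (q.1, d) * C (d, c) (q.2.1, q.2.2) := by
  simp only [Matrix.mul_apply, leg12, leg23, Fintype.sum_prod_type]
  simp [mul_ite, ite_mul, Finset.sum_mul, Finset.mul_sum, mul_assoc]
  exact sum3_rev fun x y z => A p.2 (x, y) * (B (p.1, x) (q.1, z) * C (z, y) q.2)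


lemma leg12_mul (A B : TwoLeg N S) : leg12 (A * B) = leg12 A * leg12 B := by
  ext p q
  simp only [Matrix.mul_apply, leg12, Fintype.sum_prod_type]
  simp [mul_ite, ite_mul, Finset.sum_mul, Finset.mul_sum, mul_assoc]

lemma leg23_mul (A B : TwoLeg N S) : leg23 (A * B) = leg23 A * leg23 B := by
  ext p q
  simp only [Matrix.mul_apply, leg23, Fintype.sum_prod_type]
  simp [mul_ite, ite_mul, Finset.sum_mul, Finset.mul_sum, mul_assoc]

lemma leg12_one : leg12 (1 : TwoLeg N S) = 1 := by
  ext p q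
  simp only [leg12, Matrix.one_apply, Prod.ext_iff]
  by_cases h1 : p.1 = q.1 <;> by_cases h2 : p.2.1 = q.2.1 <;> by_cases h3 : p.2.2 = q.2.2 <;>
    simp [h1, h2, h3]

lemma leg23_one : leg23 (1 : TwoLeg N S) = 1 := by
  ext p q
  simp only [leg23, Matrix.one_apply, Prod.ext_iff]
  by_cases h1 : p.1 = q.1 <;> by_cases h2 : p.2.1 = q.2.1 <;> by_cases h3 : p.2.2 = q.2.2 <;>
    simp [h1, h2, h3]


variable {X ψ F Finv : TwoLeg N S}

lemma S1 (h : ptrMid (leg12 X * leg23 ψ) = permP N S) (i j i' j' : Fin N) :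
    ∑ k : Fin N, ∑ b : Fin N, X (i, k) (i', b) * ψ (b, j) (k, j')
      = if i = j' ∧ j = i' then 1 else 0 := by
  have := congrFun (congrFun h (i, j)) (i', j')
  rwa [ptrMid12_23] at this

lemma S2 (h : ptrMid (leg12 ψ * leg23 X) = permP N S) (i j i' j' : Fin N) :
    ∑ k : Fin N, ∑ b : Fin N, ψ (i, k) (i', b) * X (b, j) (k, j')
      = if i = j' ∧ j = i' then 1 else 0 := by
  have := congrFun (congrFun h (i, j)) (i', j')
  rwa [ptrMid12_23] at this

lemma Fact1 (h : ptrMid (leg12 ψ * leg23 X) = permP N S) (a c : Fin N) :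
    ∑ k : Fin N, ∑ b : Fin N, trLeg1 ψ k b * X (b, a) (k, c)
      = if a = c then 1 else 0 := by
  simp only [trLeg1, Finset.sum_mul]
  have swap : ∀ k : Fin N, ∑ b : Fin N, ∑ i : Fin N, ψ (i, k) (i, b) * X (b, a) (k, c)
      = ∑ i : Fin N, ∑ b : Fin N, ψ (i, k) (i, b) * X (b, a) (k, c) :=
    fun k => Finset.sum_comm
  simp_rw [swap]
  rw [Finset.sum_comm]
  have h2 : ∀ i : Fin N, ∑ k : Fin N, ∑ b : Fin N, ψ (i, k) (i, b) * X (b, a) (k, c)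
      = if i = c ∧ a = i then 1 else 0 := fun i => S2 h i a i c
  simp_rw [h2]
  have e : ∀ i : Fin N, ((i = c ∧ a = i) ↔ (a = c ∧ i = c)) := by
    intro i; constructor <;> rintro ⟨rfl, rfl⟩ <;> exact ⟨rfl, rfl⟩
  simp_rw [e]
  rcases eq_or_ne a c with hac | hac
  · simp [hac]
  · simp [hac]

lemma E2 (hA : leg12 X * leg23 F * leg12 F = leg23 F * leg12 F * leg23 X)
    (hFF : F * Finv = 1) (hFiF : Finv * F = 1) :
    leg12 F * leg23 X * leg12 Finv = leg23 Finv * leg12 X * leg23 F := by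
  have h1 : leg12 F * leg12 Finv = (1 : ThreeLeg N S) := by
    rw [← leg12_mul, hFF, leg12_one]
  have h2 : leg23 Finv * leg23 F = (1 : ThreeLeg N S) := by
    rw [← leg23_mul, hFiF, leg23_one]
  calc leg12 F * leg23 X * leg12 Finv
      = (leg23 Finv * leg23 F) * (leg12 F * leg23 X * leg12 Finv) := by rw [h2, one_mul]
    _ = leg23 Finv * ((leg23 F * leg12 F * leg23 X) * leg12 Finv) := by simp only [mul_assoc]
    _ = leg23 Finv * ((leg12 X * leg23 F * leg12 F) * leg12 Finv) := by rw [hA]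
    _ = (leg23 Finv * leg12 X * leg23 F) * (leg12 F * leg12 Finv) := by simp only [mul_assoc]
    _ = leg23 Finv * leg12 X * leg23 F := by rw [h1, mul_one]

lemma E1 (hB : leg23 X * leg12 F * leg23 F = leg12 F * leg23 F * leg12 X)
    (hFF : F * Finv = 1) (hFiF : Finv * F = 1) :
    leg12 Finv * leg23 X * leg12 F = leg23 F * leg12 X * leg23 Finv := by
  have h1 : leg12 Finv * leg12 F = (1 : ThreeLeg N S) := by
    rw [← leg12_mul, hFiF, leg12_one]
  have h2 : leg23 F * leg23 Finv = (1 : ThreeLeg N S) := by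
    rw [← leg23_mul, hFF, leg23_one]
  calc leg12 Finv * leg23 X * leg12 F
      = leg12 Finv * leg23 X * leg12 F * (leg23 F * leg23 Finv) := by rw [h2, mul_one]
    _ = leg12 Finv * ((leg23 X * leg12 F * leg23 F) * leg23 Finv) := by simp only [mul_assoc]
    _ = leg12 Finv * ((leg12 F * leg23 F * leg12 X) * leg23 Finv) := by rw [hB]
    _ = (leg12 Finv * leg12 F) * (leg23 F * (leg12 X * leg23 Finv)) := by simp only [mul_assoc]
    _ = leg23 F * leg12 X * leg23 Finv := by rw [h1, one_mul, mul_assoc]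


lemma rot3 {A : Type*} [AddCommMonoid A] (g : Fin N → Fin N → Fin N → A) :
    ∑ x : Fin N, ∑ y : Fin N, ∑ z : Fin N, g x y z
      = ∑ y : Fin N, ∑ z : Fin N, ∑ x : Fin N, g x y z := by
  rw [Finset.sum_comm]
  exact Finset.sum_congr rfl fun y _ => Finset.sum_comm

lemma rot4 {A : Type*} [AddCommMonoid A] (g : Fin N → Fin N → Fin N → Fin N → A) :
    ∑ x : Fin N, ∑ y : Fin N, ∑ z : Fin N, ∑ w : Fin N, g x y z w
      = ∑ y : Fin N, ∑ z : Fin N, ∑ w : Fin N, ∑ x : Fin N, g x y z w := by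
  rw [Finset.sum_comm]
  exact Finset.sum_congr rfl fun y _ => rot3 fun x z w => g x y z w

lemma rot5 {A : Type*} [AddCommMonoid A] (g : Fin N → Fin N → Fin N → Fin N → Fin N → A) :
    ∑ x : Fin N, ∑ y : Fin N, ∑ z : Fin N, ∑ w : Fin N, ∑ v : Fin N, g x y z w v
      = ∑ y : Fin N, ∑ z : Fin N, ∑ w : Fin N, ∑ v : Fin N, ∑ x : Fin N, g x y z w v := by
  rw [Finset.sum_comm]
  exact Finset.sum_congr rfl fun y _ => rot4 fun x z w v => g x y z w v

lemma rot6 {A : Type*} [AddCommMonoid A] (g : Fin N → Fin N → Fin N → Fin N → Fin N → Fin N → A) :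
    ∑ x : Fin N, ∑ y : Fin N, ∑ z : Fin N, ∑ w : Fin N, ∑ v : Fin N, ∑ u : Fin N, g x y z w v u
      = ∑ y : Fin N, ∑ z : Fin N, ∑ w : Fin N, ∑ v : Fin N, ∑ u : Fin N, ∑ x : Fin N,
          g x y z w v u := by
  rw [Finset.sum_comm]
  exact Finset.sum_congr rfl fun y _ => rot5 fun x z w v u => g x y z w v u

lemma rot7 {A : Type*} [AddCommMonoid A] (g : Fin N → Fin N → Fin N → Fin N → Fin N → Fin N → Fin N → A) :
    ∑ x : Fin N, ∑ y : Fin N, ∑ z : Fin N, ∑ w : Fin N, ∑ v : Fin N, ∑ u : Fin N, ∑ t : Fin N,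
        g x y z w v u t
      = ∑ y : Fin N, ∑ z : Fin N, ∑ w : Fin N, ∑ v : Fin N, ∑ u : Fin N, ∑ t : Fin N, ∑ x : Fin N,
          g x y z w v u t := by
  rw [Finset.sum_comm]
  exact Finset.sum_congr rfl fun y _ => rot6 fun x z w v u t => g x y z w v u t

lemma KEY {G Ginv : TwoLeg N S} (h : ptrMid (leg12 ψ * leg23 X) = permP N S)
    (hE : leg12 G * leg23 X * leg12 Ginv = leg23 Ginv * leg12 X * leg23 G)
    (hGiG : Ginv * G = 1) (m m' u w : Fin N) :
    ∑ i : Fin N, ∑ p : Fin N, trLeg1 ψ i p *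
        ((leg12 G * leg23 X * leg12 Ginv) (p, m, u) (i, m', w))
      = if m = m' ∧ u = w then 1 else 0 := by
  simp_rw [hE, L232]
  simp_rw [Finset.mul_sum]
  rw [rot5 fun i p b c d => trLeg1 ψ i p *
    (Ginv (m, u) (b, c) * X (p, b) (i, d) * G (d, c) (m', w))]
  rw [rot5 fun p b c d i => trLeg1 ψ i p *
    (Ginv (m, u) (b, c) * X (p, b) (i, d) * G (d, c) (m', w))]
  have rearr : ∀ (a q x r : S), a * (q * x * r) = q * (a * x * r) := fun a q x r => by ring
  simp_rw [rearr, ← Finset.mul_sum]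
  have inner : ∀ b c : Fin N,
      (∑ d : Fin N, ∑ i : Fin N, ∑ p : Fin N,
        trLeg1 ψ i p * X (p, b) (i, d) * G (d, c) (m', w)) = G (b, c) (m', w) := by
    intro b c
    have step : ∀ d : Fin N, (∑ i : Fin N, ∑ p : Fin N,
        trLeg1 ψ i p * X (p, b) (i, d) * G (d, c) (m', w))
        = (if b = d then 1 else 0) * G (d, c) (m', w) := by
      intro d
      simp_rw [← Finset.sum_mul]
      rw [Fact1 h b d]
    simp_rw [step, ite_mul, one_mul, zero_mul]
    simp
  simp_rw [inner]
  have : (∑ b : Fin N, ∑ c : Fin N, Ginv (m, u) (b, c) * G (b, c) (m', w))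
      = (Ginv * G) ((m, u)) ((m', w)) := by
    rw [Matrix.mul_apply, Fintype.sum_prod_type]
  rw [this, hGiG, Matrix.one_apply]
  simp [Prod.ext_iff]


lemma KEY' {G Ginv : TwoLeg N S} (h : ptrMid (leg12 ψ * leg23 X) = permP N S)
    (hE : leg12 G * leg23 X * leg12 Ginv = leg23 Ginv * leg12 X * leg23 G)
    (hGiG : Ginv * G = 1) (m m' u w : Fin N) :
    ∑ i : Fin N, ∑ p : Fin N, ∑ s : Fin N, ∑ v : Fin N, ∑ t : Fin N,
        trLeg1 ψ i p * (G (p, m) (s, v) * X (v, u) (t, w) * Ginv (s, t) (i, m'))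
      = if m = m' ∧ u = w then 1 else 0 := by
  rw [← KEY h hE hGiG m m' u w]
  simp_rw [L121, Finset.mul_sum]

lemma KEYFULL {G Ginv : TwoLeg N S} (h : ptrMid (leg12 ψ * leg23 X) = permP N S)
    (hE : leg12 G * leg23 X * leg12 Ginv = leg23 Ginv * leg12 X * leg23 G)
    (hGiG : Ginv * G = 1) (m m' d e : Fin N) :
    ∑ i : Fin N, ∑ p : Fin N, ∑ s : Fin N, ∑ v : Fin N, ∑ t : Fin N,
        trLeg1 ψ i p * G (p, m) (s, v) *
          (∑ b : Fin N, ∑ c : Fin N, X (v, b) (t, c) * ψ (c, d) (b, e)) * Ginv (s, t) (i, m')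
      = (if m = m' then 1 else 0) * trLeg1 ψ d e := by
  simp_rw [Finset.mul_sum, Finset.sum_mul]
  rw [← rot7 fun c i p s v t b => trLeg1 ψ i p * G (p, m) (s, v) *
    (X (v, b) (t, c) * ψ (c, d) (b, e)) * Ginv (s, t) (i, m')]
  rw [← rot7 fun b c i p s v t => trLeg1 ψ i p * G (p, m) (s, v) *
    (X (v, b) (t, c) * ψ (c, d) (b, e)) * Ginv (s, t) (i, m')]
  have rearr : ∀ (a g x pp f : S), a * g * (x * pp) * f = a * (g * x * f) * pp :=
    fun a g x pp f => by ring
  simp_rw [rearr, ← Finset.sum_mul]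
  have inner : ∀ b c : Fin N,
      (∑ i : Fin N, ∑ p : Fin N, ∑ s : Fin N, ∑ v : Fin N, ∑ t : Fin N,
        trLeg1 ψ i p * (G (p, m) (s, v) * X (v, b) (t, c) * Ginv (s, t) (i, m')))
      = if m = m' ∧ b = c then 1 else 0 := fun b c => KEY' h hE hGiG m m' b c
  simp_rw [inner, ite_mul, one_mul, zero_mul]
  rcases eq_or_ne m m' with hmm | hmm
  · subst hmm
    simp [trLeg1]
  · simp [hmm]


section Wlevel
variable {W : Type} [Ring W]

lemma entry4 (C : Matrix (Fin N) (Fin N) W) (F : TwoLeg N W) (M : Matrix (Fin N) (Fin N) W)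
    (Fi : TwoLeg N W) (i m j m' : Fin N) :
    (leg1 C * F * leg2 M * Fi) (i, m) (j, m')
      = ∑ p : Fin N, ∑ s : Fin N, ∑ v : Fin N, ∑ t : Fin N,
          C i p * F (p, m) (s, v) * M v t * Fi (s, t) (j, m') := by
  simp only [Matrix.mul_apply, leg1, leg2, Fintype.sum_prod_type]
  simp [mul_ite, ite_mul, Finset.sum_mul, Finset.mul_sum, mul_assoc]
  rw [← rot4 fun p s t v => C i p * (F (p, m) (s, v) * (M v t * Fi (s, t) (j, m')))]
  exact Finset.sum_congr rfl fun p _ => Finset.sum_congr rfl fun s _ => Finset.sum_comm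

variable {S : Type} [CommRing S] [Algebra S W]

lemma SUB {X ψ : TwoLeg N S} (h1 : ptrMid (leg12 X * leg23 ψ) = permP N S)
    (M : Matrix (Fin N) (Fin N) W) (v t : Fin N) :
    M v t = ∑ d : Fin N, ∑ e : Fin N,
      algebraMap S W (∑ b : Fin N, ∑ c : Fin N, X (v, b) (t, c) * ψ (c, d) (b, e)) * M e d := by
  have s1 : ∀ d e : Fin N, (∑ b : Fin N, ∑ c : Fin N, X (v, b) (t, c) * ψ (c, d) (b, e))
      = if v = e ∧ d = t then 1 else 0 := fun d e => S1 h1 v d t e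
  simp_rw [s1, apply_ite (algebraMap S W), _root_.map_one, _root_.map_zero, ite_mul, one_mul, zero_mul,
    ite_and]
  simp

lemma keyterm (a g x f : S) (mm : W) :
    algebraMap S W a * algebraMap S W g * (algebraMap S W x * mm) * algebraMap S W f
      = algebraMap S W (a * g * x * f) * mm := by
  simp only [_root_.map_mul, mul_assoc]
  rw [← Algebra.commutes f mm]

lemma MAIN (X ψ G Ginv : TwoLeg N S)
    (h1 : ptrMid (leg12 X * leg23 ψ) = permP N S)
    (h2 : ptrMid (leg12 ψ * leg23 X) = permP N S)
    (hE : leg12 G * leg23 X * leg12 Ginv = leg23 Ginv * leg12 X * leg23 G)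
    (hGiG : Ginv * G = 1)
    (M : Matrix (Fin N) (Fin N) W) :
    trLeg1 (leg1 ((trLeg1 ψ).map (algebraMap S W)) * G.map (algebraMap S W) *
        leg2 M * Ginv.map (algebraMap S W)) =
      Matrix.diagonal (fun _ => Matrix.trace ((trLeg1 ψ).map (algebraMap S W) * M)) := by
  obtain ⟨M', hM'⟩ : ∃ M'', M'' = M := ⟨M, rfl⟩
  ext m m'
  rw [trLeg1]
  simp_rw [entry4]
  have hsub : ∀ v t : Fin N, M v t = ∑ d : Fin N, ∑ e : Fin N,
      algebraMap S W (∑ b : Fin N, ∑ c : Fin N, X (v, b) (t, c) * ψ (c, d) (b, e)) * M' e d :=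
    fun v t => (SUB h1 M v t).trans (by rw [hM'])
  simp_rw [hsub, Matrix.map_apply, Finset.mul_sum, Finset.sum_mul, keyterm]
  rw [← rot7 fun e i p s v t d =>
    algebraMap S W ((trLeg1 ψ i p * G (p, m) (s, v) *
        ∑ b : Fin N, ∑ c : Fin N, X (v, b) (t, c) * ψ (c, d) (b, e)) *
      Ginv (s, t) (i, m')) * M' e d]
  rw [← rot7 fun d e i p s v t =>
    algebraMap S W ((trLeg1 ψ i p * G (p, m) (s, v) *
        ∑ b : Fin N, ∑ c : Fin N, X (v, b) (t, c) * ψ (c, d) (b, e)) *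
      Ginv (s, t) (i, m')) * M' e d]
  simp_rw [← Finset.sum_mul, ← map_sum]
  simp_rw [KEYFULL h2 hE hGiG m m']
  subst hM'
  rcases eq_or_ne m m' with rfl | hne
  · simp [Matrix.trace, Matrix.diag, Matrix.mul_apply, Matrix.map_apply]
  · simp [hne, Matrix.diagonal_apply]
end Wlevel
end CPT

/-- Lemma 3.2: for a compatible pair `{X,F}` with `X` skew invertible and
`C_X = Tr₁(Ψ_X)`, for any matrix `M` with entries in an algebra `W`:
`Tr₁((C_X)₁ F₁₂^ε M₂ F₁₂^{-ε}) = I₂ · tr(C_X M)` for `ε = ±1`. -/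
theorem compatible_pair_trace_formula
    {N : ℕ} {W : Type} [Ring W] [Algebra ℂ W]
    (X ΨX F Finv : TwoLeg N ℂ)
    (hX : IsSkewInverse X ΨX)
    (hFinv : F * Finv = 1 ∧ Finv * F = 1)
    (hcomp : IsCompatiblePair X F)
    (M : Matrix (Fin N) (Fin N) W) :
    trLeg1 (leg1 ((trLeg1 ΨX).map (algebraMap ℂ W)) * F.map (algebraMap ℂ W) *
        leg2 M * Finv.map (algebraMap ℂ W)) =
      Matrix.diagonal (fun _ => Matrix.trace ((trLeg1 ΨX).map (algebraMap ℂ W) * M)) ∧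
    trLeg1 (leg1 ((trLeg1 ΨX).map (algebraMap ℂ W)) * Finv.map (algebraMap ℂ W) *
        leg2 M * F.map (algebraMap ℂ W)) =
      Matrix.diagonal (fun _ => Matrix.trace ((trLeg1 ΨX).map (algebraMap ℂ W) * M)) := by
  refine ⟨?_, ?_⟩
  · exact CPT.MAIN X ΨX F Finv hX.1 hX.2 (CPT.E2 hcomp.1 hFinv.1 hFinv.2) hFinv.2 M
  · exact CPT.MAIN X ΨX Finv F hX.1 hX.2 (CPT.E1 hcomp.2 hFinv.1 hFinv.2) hFinv.1 M
end

section
/- Let {X,F} be a compatible pair of skew invertible operators on V⊗V. Then (C_X)₁ (Ψ_F)₁₂ = F₂₁^{-1} (C_X)₂ and (Ψ_F)₁₂ (D_X)₂ = (D_X)₁ F₂₁^{-1}, where C_X := Tr₁(Ψ_X)₁₂ and D_X := Tr₂(Ψ_X)₁₂. -/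
open Matrix

namespace Skew
variable {N : ℕ}

/-! ### sum reordering helpers -/

lemma sum3_rot {M : Type} [AddCommMonoid M] (f : Fin N → Fin N → Fin N → M) :
    ∑ a, ∑ b, ∑ c, f a b c = ∑ c, ∑ a, ∑ b, f a b c := by
  calc ∑ a, ∑ b, ∑ c, f a b c = ∑ a, ∑ c, ∑ b, f a b c :=
        Finset.sum_congr rfl (fun _ _ => Finset.sum_comm)
    _ = ∑ c, ∑ a, ∑ b, f a b c := Finset.sum_comm

lemma sum3_rev {M : Type} [AddCommMonoid M] (f : Fin N → Fin N → Fin N → M) :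
    ∑ a, ∑ b, ∑ c, f a b c = ∑ c, ∑ b, ∑ a, f a b c := by
  calc ∑ a, ∑ b, ∑ c, f a b c = ∑ c, ∑ a, ∑ b, f a b c := sum3_rot f
    _ = ∑ c, ∑ b, ∑ a, f a b c := Finset.sum_congr rfl (fun _ _ => Finset.sum_comm)

lemma sum5_merge {M : Type} [AddCommMonoid M]
    (f : Fin N → Fin N → Fin N → Fin N → Fin N → M) :
    ∑ a, ∑ b, ∑ c, ∑ d, ∑ e, f a b c d e
      = ∑ p : Fin N × Fin N × Fin N × Fin N × Fin N,
          f p.1 p.2.1 p.2.2.1 p.2.2.2.1 p.2.2.2.2 := by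
  simp only [Fintype.sum_prod_type]

/-- abcde → cdeab -/
lemma perm_cdeab {M : Type} [AddCommMonoid M]
    (f : Fin N → Fin N → Fin N → Fin N → Fin N → M) :
    ∑ a, ∑ b, ∑ c, ∑ d, ∑ e, f a b c d e
      = ∑ c, ∑ d, ∑ e, ∑ a, ∑ b, f a b c d e := by
  rw [sum5_merge, sum5_merge (fun c d e a b => f a b c d e)]
  exact Fintype.sum_equiv
    ⟨fun p => (p.2.2.1, p.2.2.2.1, p.2.2.2.2, p.1, p.2.1),
     fun q => (q.2.2.2.1, q.2.2.2.2, q.1, q.2.1, q.2.2.1),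
     fun _ => rfl, fun _ => rfl⟩ _ _ (fun _ => rfl)

/-- abcde → decab -/
lemma perm_decab {M : Type} [AddCommMonoid M]
    (f : Fin N → Fin N → Fin N → Fin N → Fin N → M) :
    ∑ a, ∑ b, ∑ c, ∑ d, ∑ e, f a b c d e
      = ∑ d, ∑ e, ∑ c, ∑ a, ∑ b, f a b c d e := by
  rw [sum5_merge, sum5_merge (fun d e c a b => f a b c d e)]
  exact Fintype.sum_equiv
    ⟨fun p => (p.2.2.2.1, p.2.2.2.2, p.2.2.1, p.1, p.2.1),
     fun q => (q.2.2.2.1, q.2.2.2.2, q.2.2.1, q.1, q.2.1),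
     fun _ => rfl, fun _ => rfl⟩ _ _ (fun _ => rfl)

/-- abcde → dceab -/
lemma perm_dceab {M : Type} [AddCommMonoid M]
    (f : Fin N → Fin N → Fin N → Fin N → Fin N → M) :
    ∑ a, ∑ b, ∑ c, ∑ d, ∑ e, f a b c d e
      = ∑ d, ∑ c, ∑ e, ∑ a, ∑ b, f a b c d e := by
  rw [sum5_merge, sum5_merge (fun d c e a b => f a b c d e)]
  exact Fintype.sum_equiv
    ⟨fun p => (p.2.2.2.1, p.2.2.1, p.2.2.2.2, p.1, p.2.1),
     fun q => (q.2.2.2.1, q.2.2.2.2, q.2.1, q.1, q.2.2.1),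
     fun _ => rfl, fun _ => rfl⟩ _ _ (fun _ => rfl)

/-- abcde → cdeba -/
lemma perm_cdeba {M : Type} [AddCommMonoid M]
    (f : Fin N → Fin N → Fin N → Fin N → Fin N → M) :
    ∑ a, ∑ b, ∑ c, ∑ d, ∑ e, f a b c d e
      = ∑ c, ∑ d, ∑ e, ∑ b, ∑ a, f a b c d e := by
  rw [sum5_merge, sum5_merge (fun c d e b a => f a b c d e)]
  exact Fintype.sum_equiv
    ⟨fun p => (p.2.2.1, p.2.2.2.1, p.2.2.2.2, p.2.1, p.1),
     fun q => (q.2.2.2.2, q.2.2.2.1, q.1, q.2.1, q.2.2.1),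
     fun _ => rfl, fun _ => rfl⟩ _ _ (fun _ => rfl)

/-- abcde → ecdba -/
lemma perm_ecdba {M : Type} [AddCommMonoid M]
    (f : Fin N → Fin N → Fin N → Fin N → Fin N → M) :
    ∑ a, ∑ b, ∑ c, ∑ d, ∑ e, f a b c d e
      = ∑ e, ∑ c, ∑ d, ∑ b, ∑ a, f a b c d e := by
  rw [sum5_merge, sum5_merge (fun e c d b a => f a b c d e)]
  exact Fintype.sum_equiv
    ⟨fun p => (p.2.2.2.2, p.2.2.1, p.2.2.2.1, p.2.1, p.1),
     fun q => (q.2.2.2.2, q.2.2.2.1, q.2.1, q.2.2.1, q.1),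
     fun _ => rfl, fun _ => rfl⟩ _ _ (fun _ => rfl)

end Skew

namespace Skew
variable {N : ℕ}

lemma ptr_leg12_leg23 (A B : TwoLeg N ℂ) (p q : Fin N × Fin N) :
    ptrMid (leg12 A * leg23 B) p q
      = ∑ a : Fin N, ∑ b : Fin N, A (p.1, a) (q.1, b) * B (b, p.2) (a, q.2) := by
  simp [ptrMid, Matrix.mul_apply, leg12, leg23, Fintype.sum_prod_type, mul_ite, ite_mul,
    mul_zero, zero_mul, mul_one, one_mul, Finset.sum_ite_eq, Finset.sum_ite_eq']

lemma mul3_231 (A B C : TwoLeg N ℂ) (r s : Fin N × Fin N × Fin N) :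
    (leg23 A * leg12 B * leg23 C) r s
      = ∑ b : Fin N, ∑ e : Fin N, ∑ fp : Fin N,
          A (r.2.1, r.2.2) (b, fp) * B (r.1, b) (s.1, e) * C (e, fp) (s.2.1, s.2.2) := by
  simp [Matrix.mul_apply, leg12, leg23, Fintype.sum_prod_type, mul_ite, ite_mul,
    mul_zero, zero_mul, mul_one, one_mul, Finset.sum_ite_eq, Finset.sum_ite_eq',
    Finset.mul_sum, Finset.sum_mul, mul_assoc]
  exact sum3_rot fun a b c => A r.2 (c, b) * (B (r.1, c) (s.1, a) * C (a, b) s.2)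

lemma mul3_123 (A B C : TwoLeg N ℂ) (r s : Fin N × Fin N × Fin N) :
    (leg12 A * leg23 B * leg12 C) r s
      = ∑ b : Fin N, ∑ d : Fin N, ∑ e : Fin N,
          A (r.1, r.2.1) (d, b) * B (b, r.2.2) (e, s.2.2) * C (d, e) (s.1, s.2.1) := by
  simp [Matrix.mul_apply, leg12, leg23, Fintype.sum_prod_type, mul_ite, ite_mul,
    mul_zero, zero_mul, mul_one, one_mul, Finset.sum_ite_eq, Finset.sum_ite_eq',
    Finset.mul_sum, Finset.sum_mul, mul_assoc]
  exact sum3_rot fun a b c =>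
    A (r.1, r.2.1) (a, c) * (B (c, r.2.2) (b, s.2.2) * C (a, b) (s.1, s.2.1))

end Skew

namespace Skew
variable {N : ℕ}

lemma leg12_mul (A B : TwoLeg N ℂ) : leg12 (A * B) = leg12 A * leg12 B := by
  ext p q
  simp [leg12, Matrix.mul_apply, Fintype.sum_prod_type, mul_ite, ite_mul, mul_zero, zero_mul,
    mul_one, one_mul, Finset.sum_ite_eq, Finset.sum_ite_eq', Finset.sum_mul, Finset.mul_sum]

lemma leg23_mul (A B : TwoLeg N ℂ) : leg23 (A * B) = leg23 A * leg23 B := by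
  ext p q
  simp [leg23, Matrix.mul_apply, Fintype.sum_prod_type, mul_ite, ite_mul, mul_zero, zero_mul,
    mul_one, one_mul, Finset.sum_ite_eq, Finset.sum_ite_eq', Finset.sum_mul, Finset.mul_sum]

lemma leg12_one : leg12 (1 : TwoLeg N ℂ) = 1 := by
  ext ⟨p1, p2, p3⟩ ⟨q1, q2, q3⟩
  simp only [leg12, Matrix.one_apply, Prod.ext_iff, Prod.mk.injEq]
  split_ifs <;> simp_all

lemma leg23_one : leg23 (1 : TwoLeg N ℂ) = 1 := by
  ext ⟨p1, p2, p3⟩ ⟨q1, q2, q3⟩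
  simp only [leg23, Matrix.one_apply, Prod.ext_iff, Prod.mk.injEq]
  split_ifs <;> simp_all

lemma mul2_apply (A B : TwoLeg N ℂ) (p q : Fin N × Fin N) :
    (A * B) p q = ∑ a, ∑ b, A p (a, b) * B (a, b) q := by
  simp [Matrix.mul_apply, Fintype.sum_prod_type]

lemma one_apply2 (p q : Fin N × Fin N) :
    (1 : TwoLeg N ℂ) p q = if p.1 = q.1 ∧ p.2 = q.2 then 1 else 0 := by
  simp [Matrix.one_apply, Prod.ext_iff]

end Skew

namespace Skew
variable {N : ℕ}

lemma leg1_mul_apply (Cm : Matrix (Fin N) (Fin N) ℂ) (M : TwoLeg N ℂ) (p q : Fin N × Fin N) :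
    (leg1 Cm * M) p q = ∑ a, Cm p.1 a * M (a, p.2) q := by
  simp [Matrix.mul_apply, leg1, Fintype.sum_prod_type, mul_ite, ite_mul, mul_zero, zero_mul,
    mul_one, one_mul, Finset.sum_ite_eq, Finset.sum_ite_eq']

lemma swap_leg2_apply (G : TwoLeg N ℂ) (Cm : Matrix (Fin N) (Fin N) ℂ) (p q : Fin N × Fin N) :
    (swapLegs G * leg2 Cm) p q = ∑ a, G (p.2, p.1) (a, q.1) * Cm a q.2 := by
  simp [Matrix.mul_apply, swapLegs, leg2, Fintype.sum_prod_type, mul_ite, ite_mul, mul_zero,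
    zero_mul, mul_one, one_mul, Finset.sum_ite_eq, Finset.sum_ite_eq']

lemma mul_leg2_apply (M : TwoLeg N ℂ) (Dm : Matrix (Fin N) (Fin N) ℂ) (p q : Fin N × Fin N) :
    (M * leg2 Dm) p q = ∑ a, M p (q.1, a) * Dm a q.2 := by
  simp [Matrix.mul_apply, leg2, Fintype.sum_prod_type, mul_ite, ite_mul, mul_zero, zero_mul,
    mul_one, one_mul, Finset.sum_ite_eq, Finset.sum_ite_eq']

lemma leg1_mul_swap_apply (Dm : Matrix (Fin N) (Fin N) ℂ) (G : TwoLeg N ℂ) (p q : Fin N × Fin N) :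
    (leg1 Dm * swapLegs G) p q = ∑ a, Dm p.1 a * G (p.2, a) (q.2, q.1) := by
  simp [Matrix.mul_apply, swapLegs, leg1, Fintype.sum_prod_type, mul_ite, ite_mul, mul_zero,
    zero_mul, mul_one, one_mul, Finset.sum_ite_eq, Finset.sum_ite_eq']

end Skew

open Skew

/-- Lemma 3.3: for a compatible pair `{X,F}` of skew invertible operators,
`(C_X)₁ (Ψ_F)₁₂ = F₂₁⁻¹ (C_X)₂` and `(Ψ_F)₁₂ (D_X)₂ = (D_X)₁ F₂₁⁻¹`. -/
theorem skew_inverse_CD_relations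
    {N : ℕ} (X ΨX F ΨF Finv : TwoLeg N ℂ)
    (hX : IsSkewInverse X ΨX) (hF : IsSkewInverse F ΨF)
    (hFinv : F * Finv = 1 ∧ Finv * F = 1)
    (hcomp : IsCompatiblePair X F) :
    leg1 (trLeg1 ΨX) * ΨF = swapLegs Finv * leg2 (trLeg1 ΨX) ∧
    ΨF * leg2 (trLeg2 ΨX) = leg1 (trLeg2 ΨX) * swapLegs Finv := by
  have hx1 : ∀ i j k l : Fin N,
      ∑ a, ∑ b, X (i,a) (k,b) * ΨX (b,j) (a,l) = if i = l ∧ j = k then (1:ℂ) else 0 := by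
    intro i j k l
    have h := congrFun (congrFun hX.1 (i,j)) (k,l)
    rw [ptr_leg12_leg23] at h
    simpa [permP] using h
  have hx2 : ∀ i j k l : Fin N,
      ∑ a, ∑ b, ΨX (i,a) (k,b) * X (b,j) (a,l) = if i = l ∧ j = k then (1:ℂ) else 0 := by
    intro i j k l
    have h := congrFun (congrFun hX.2 (i,j)) (k,l)
    rw [ptr_leg12_leg23] at h
    simpa [permP] using h
  have hf1 : ∀ i j k l : Fin N,
      ∑ a, ∑ b, F (i,a) (k,b) * ΨF (b,j) (a,l) = if i = l ∧ j = k then (1:ℂ) else 0 := by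
    intro i j k l
    have h := congrFun (congrFun hF.1 (i,j)) (k,l)
    rw [ptr_leg12_leg23] at h
    simpa [permP] using h
  have hf2 : ∀ i j k l : Fin N,
      ∑ a, ∑ b, ΨF (i,a) (k,b) * F (b,j) (a,l) = if i = l ∧ j = k then (1:ℂ) else 0 := by
    intro i j k l
    have h := congrFun (congrFun hF.2 (i,j)) (k,l)
    rw [ptr_leg12_leg23] at h
    simpa [permP] using h
  have hfg : ∀ i j k l : Fin N,
      ∑ a, ∑ b, F (i,j) (a,b) * Finv (a,b) (k,l) = if i = k ∧ j = l then (1:ℂ) else 0 := by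
    intro i j k l
    have h := congrFun (congrFun hFinv.1 (i,j)) (k,l)
    rw [mul2_apply] at h
    simpa [one_apply2] using h
  have hgf : ∀ i j k l : Fin N,
      ∑ a, ∑ b, Finv (i,j) (a,b) * F (a,b) (k,l) = if i = k ∧ j = l then (1:ℂ) else 0 := by
    intro i j k l
    have h := congrFun (congrFun hFinv.2 (i,j)) (k,l)
    rw [mul2_apply] at h
    simpa [one_apply2] using h
  have step1 : leg23 Finv * leg12 X * leg23 F = leg12 F * leg23 X * leg12 Finv := by
    have h1 : leg12 F * leg12 Finv = 1 := by rw [← leg12_mul, hFinv.1, leg12_one]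
    have h2 : leg23 Finv * leg23 F = 1 := by rw [← leg23_mul, hFinv.2, leg23_one]
    calc leg23 Finv * leg12 X * leg23 F
        = leg23 Finv * leg12 X * leg23 F * (leg12 F * leg12 Finv) := by rw [h1, mul_one]
      _ = leg23 Finv * (leg12 X * leg23 F * leg12 F) * leg12 Finv := by
          simp only [mul_assoc]
      _ = leg23 Finv * (leg23 F * leg12 F * leg23 X) * leg12 Finv := by rw [hcomp.1]
      _ = (leg23 Finv * leg23 F) * (leg12 F * (leg23 X * leg12 Finv)) := by
          simp only [mul_assoc]
      _ = leg12 F * leg23 X * leg12 Finv := by rw [h2, one_mul, mul_assoc]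
  have E1 : ∀ i j k l m n : Fin N,
      ∑ b, ∑ fp, ∑ e, Finv (j,k) (b,fp) * X (i,b) (l,e) * F (e,fp) (m,n)
        = ∑ b, ∑ d, ∑ e, F (i,j) (d,b) * X (b,k) (e,n) * Finv (d,e) (l,m) := by
    intro i j k l m n
    have h := congrFun (congrFun step1 (i,j,k)) (l,m,n)
    rw [mul3_231, mul3_123] at h
    calc ∑ b, ∑ fp, ∑ e, Finv (j,k) (b,fp) * X (i,b) (l,e) * F (e,fp) (m,n)
        = ∑ b, ∑ e, ∑ fp, Finv (j,k) (b,fp) * X (i,b) (l,e) * F (e,fp) (m,n) :=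
          Finset.sum_congr rfl fun _ _ => Finset.sum_comm
      _ = ∑ b, ∑ d, ∑ e, F (i,j) (d,b) * X (b,k) (e,n) * Finv (d,e) (l,m) := h
  have P1 : ∀ b e : Fin N,
      ∑ i, ∑ l, (∑ t, ΨX (t,l) (t,i)) * X (i,b) (l,e) = if b = e then (1:ℂ) else 0 := by
    intro b e
    calc ∑ i, ∑ l, (∑ t, ΨX (t,l) (t,i)) * X (i,b) (l,e)
        = ∑ i, ∑ l, ∑ t, ΨX (t,l) (t,i) * X (i,b) (l,e) :=
          Finset.sum_congr rfl fun i _ => Finset.sum_congr rfl fun l _ => by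
            rw [Finset.sum_mul]
      _ = ∑ t, ∑ l, ∑ i, ΨX (t,l) (t,i) * X (i,b) (l,e) := sum3_rev _
      _ = ∑ t, if t = e ∧ b = t then (1:ℂ) else 0 :=
          Finset.sum_congr rfl fun t _ => hx2 t b t e
      _ = if b = e then (1:ℂ) else 0 := by
          simp [ite_and, Finset.sum_ite_eq, Finset.sum_ite_eq']
  have P2 : ∀ b e : Fin N,
      ∑ k, ∑ n, X (b,k) (e,n) * (∑ s, ΨX (n,s) (k,s)) = if b = e then (1:ℂ) else 0 := by
    intro b e
    calc ∑ k, ∑ n, X (b,k) (e,n) * (∑ s, ΨX (n,s) (k,s))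
        = ∑ k, ∑ n, ∑ s, X (b,k) (e,n) * ΨX (n,s) (k,s) :=
          Finset.sum_congr rfl fun k _ => Finset.sum_congr rfl fun n _ => by
            rw [Finset.mul_sum]
      _ = ∑ s, ∑ k, ∑ n, X (b,k) (e,n) * ΨX (n,s) (k,s) := sum3_rot _
      _ = ∑ s, if b = s ∧ s = e then (1:ℂ) else 0 :=
          Finset.sum_congr rfl fun s _ => hx1 b s e s
      _ = if b = e then (1:ℂ) else 0 := by
          simp [ite_and, Finset.sum_ite_eq, Finset.sum_ite_eq']
  have A1' : ∀ j k m n : Fin N,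
      (if j = m ∧ k = n then (1:ℂ) else 0)
        = ∑ b, ∑ d, ∑ e, X (b,k) (e,n) *
            (∑ i, ∑ l, (∑ t, ΨX (t,l) (t,i)) * (F (i,j) (d,b) * Finv (d,e) (l,m))) := by
    intro j k m n
    have main : ∑ i, ∑ l, (∑ t, ΨX (t,l) (t,i)) *
          (∑ b, ∑ fp, ∑ e, Finv (j,k) (b,fp) * X (i,b) (l,e) * F (e,fp) (m,n))
        = ∑ i, ∑ l, (∑ t, ΨX (t,l) (t,i)) *
          (∑ b, ∑ d, ∑ e, F (i,j) (d,b) * X (b,k) (e,n) * Finv (d,e) (l,m)) :=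
      Finset.sum_congr rfl fun i _ => Finset.sum_congr rfl fun l _ => by
        rw [E1 i j k l m n]
    have lhs_eq : ∑ i, ∑ l, (∑ t, ΨX (t,l) (t,i)) *
          (∑ b, ∑ fp, ∑ e, Finv (j,k) (b,fp) * X (i,b) (l,e) * F (e,fp) (m,n))
        = (if j = m ∧ k = n then (1:ℂ) else 0) := by
      calc ∑ i, ∑ l, (∑ t, ΨX (t,l) (t,i)) *
            (∑ b, ∑ fp, ∑ e, Finv (j,k) (b,fp) * X (i,b) (l,e) * F (e,fp) (m,n))
          = ∑ i, ∑ l, ∑ b, ∑ fp, ∑ e, (∑ t, ΨX (t,l) (t,i)) *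
              (Finv (j,k) (b,fp) * X (i,b) (l,e) * F (e,fp) (m,n)) := by
            refine Finset.sum_congr rfl fun i _ => Finset.sum_congr rfl fun l _ => ?_
            rw [Finset.mul_sum]
            refine Finset.sum_congr rfl fun b _ => ?_
            rw [Finset.mul_sum]
            refine Finset.sum_congr rfl fun fp _ => ?_
            rw [Finset.mul_sum]
        _ = ∑ b, ∑ fp, ∑ e, ∑ i, ∑ l, (∑ t, ΨX (t,l) (t,i)) *
              (Finv (j,k) (b,fp) * X (i,b) (l,e) * F (e,fp) (m,n)) := perm_cdeab _
        _ = ∑ b, ∑ fp, ∑ e, (Finv (j,k) (b,fp) * F (e,fp) (m,n)) *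
              (∑ i, ∑ l, (∑ t, ΨX (t,l) (t,i)) * X (i,b) (l,e)) := by
            refine Finset.sum_congr rfl fun b _ => Finset.sum_congr rfl fun fp _ =>
              Finset.sum_congr rfl fun e _ => ?_
            rw [Finset.mul_sum]
            refine Finset.sum_congr rfl fun i _ => ?_
            rw [Finset.mul_sum]
            exact Finset.sum_congr rfl fun l _ => by ring
        _ = ∑ b, ∑ fp, ∑ e, (Finv (j,k) (b,fp) * F (e,fp) (m,n)) *
              (if b = e then (1:ℂ) else 0) := by
            refine Finset.sum_congr rfl fun b _ => Finset.sum_congr rfl fun fp _ =>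
              Finset.sum_congr rfl fun e _ => ?_
            rw [P1 b e]
        _ = ∑ b, ∑ fp, Finv (j,k) (b,fp) * F (b,fp) (m,n) := by
            simp [mul_ite, ite_mul, mul_zero, zero_mul, mul_one, one_mul,
              Finset.sum_ite_eq, Finset.sum_ite_eq']
        _ = (if j = m ∧ k = n then (1:ℂ) else 0) := hgf j k m n
    have rhs_eq : ∑ i, ∑ l, (∑ t, ΨX (t,l) (t,i)) *
          (∑ b, ∑ d, ∑ e, F (i,j) (d,b) * X (b,k) (e,n) * Finv (d,e) (l,m))
        = ∑ b, ∑ d, ∑ e, X (b,k) (e,n) *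
            (∑ i, ∑ l, (∑ t, ΨX (t,l) (t,i)) * (F (i,j) (d,b) * Finv (d,e) (l,m))) := by
      calc ∑ i, ∑ l, (∑ t, ΨX (t,l) (t,i)) *
            (∑ b, ∑ d, ∑ e, F (i,j) (d,b) * X (b,k) (e,n) * Finv (d,e) (l,m))
          = ∑ i, ∑ l, ∑ b, ∑ d, ∑ e, (∑ t, ΨX (t,l) (t,i)) *
              (F (i,j) (d,b) * X (b,k) (e,n) * Finv (d,e) (l,m)) := by
            refine Finset.sum_congr rfl fun i _ => Finset.sum_congr rfl fun l _ => ?_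
            rw [Finset.mul_sum]
            refine Finset.sum_congr rfl fun b _ => ?_
            rw [Finset.mul_sum]
            refine Finset.sum_congr rfl fun d _ => ?_
            rw [Finset.mul_sum]
        _ = ∑ b, ∑ d, ∑ e, ∑ i, ∑ l, (∑ t, ΨX (t,l) (t,i)) *
              (F (i,j) (d,b) * X (b,k) (e,n) * Finv (d,e) (l,m)) := perm_cdeab _
        _ = ∑ b, ∑ d, ∑ e, X (b,k) (e,n) *
              (∑ i, ∑ l, (∑ t, ΨX (t,l) (t,i)) * (F (i,j) (d,b) * Finv (d,e) (l,m))) := by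
            refine Finset.sum_congr rfl fun b _ => Finset.sum_congr rfl fun d _ =>
              Finset.sum_congr rfl fun e _ => ?_
            rw [Finset.mul_sum]
            refine Finset.sum_congr rfl fun i _ => ?_
            rw [Finset.mul_sum]
            exact Finset.sum_congr rfl fun l _ => by ring
    exact lhs_eq.symm.trans (main.trans rhs_eq)
  have A2 : ∀ j u s m : Fin N,
      (if j = m then (1:ℂ) else 0) * (∑ t, ΨX (t,s) (t,u))
        = ∑ d, ∑ i, ∑ l, (∑ t, ΨX (t,l) (t,i)) * (F (i,j) (d,u) * Finv (d,s) (l,m)) := by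
    intro j u s m
    have main : ∑ k, ∑ n, (if j = m ∧ k = n then (1:ℂ) else 0) * ΨX (n,s) (k,u)
        = ∑ k, ∑ n, (∑ b, ∑ d, ∑ e, X (b,k) (e,n) *
            (∑ i, ∑ l, (∑ t, ΨX (t,l) (t,i)) * (F (i,j) (d,b) * Finv (d,e) (l,m))))
              * ΨX (n,s) (k,u) :=
      Finset.sum_congr rfl fun k _ => Finset.sum_congr rfl fun n _ => by
        rw [← A1' j k m n]
    have lhs_eq : ∑ k, ∑ n, (if j = m ∧ k = n then (1:ℂ) else 0) * ΨX (n,s) (k,u)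
        = (if j = m then (1:ℂ) else 0) * (∑ t, ΨX (t,s) (t,u)) := by
      by_cases h : j = m <;>
        simp [h, mul_ite, ite_mul, mul_zero, zero_mul, mul_one, one_mul,
          Finset.sum_ite_eq, Finset.sum_ite_eq', Finset.mul_sum]
    have rhs_eq : ∑ k, ∑ n, (∑ b, ∑ d, ∑ e, X (b,k) (e,n) *
            (∑ i, ∑ l, (∑ t, ΨX (t,l) (t,i)) * (F (i,j) (d,b) * Finv (d,e) (l,m))))
              * ΨX (n,s) (k,u)
        = ∑ d, ∑ i, ∑ l, (∑ t, ΨX (t,l) (t,i)) * (F (i,j) (d,u) * Finv (d,s) (l,m)) := by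
      calc ∑ k, ∑ n, (∑ b, ∑ d, ∑ e, X (b,k) (e,n) *
              (∑ i, ∑ l, (∑ t, ΨX (t,l) (t,i)) * (F (i,j) (d,b) * Finv (d,e) (l,m))))
                * ΨX (n,s) (k,u)
          = ∑ k, ∑ n, ∑ b, ∑ d, ∑ e, (X (b,k) (e,n) *
              (∑ i, ∑ l, (∑ t, ΨX (t,l) (t,i)) * (F (i,j) (d,b) * Finv (d,e) (l,m))))
                * ΨX (n,s) (k,u) := by
            refine Finset.sum_congr rfl fun k _ => Finset.sum_congr rfl fun n _ => ?_
            rw [Finset.sum_mul]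
            refine Finset.sum_congr rfl fun b _ => ?_
            rw [Finset.sum_mul]
            refine Finset.sum_congr rfl fun d _ => ?_
            rw [Finset.sum_mul]
        _ = ∑ d, ∑ e, ∑ b, ∑ k, ∑ n, (X (b,k) (e,n) *
              (∑ i, ∑ l, (∑ t, ΨX (t,l) (t,i)) * (F (i,j) (d,b) * Finv (d,e) (l,m))))
                * ΨX (n,s) (k,u) := perm_decab _
        _ = ∑ d, ∑ e, ∑ b,
              (∑ i, ∑ l, (∑ t, ΨX (t,l) (t,i)) * (F (i,j) (d,b) * Finv (d,e) (l,m))) *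
              (∑ k, ∑ n, X (b,k) (e,n) * ΨX (n,s) (k,u)) := by
            refine Finset.sum_congr rfl fun d _ => Finset.sum_congr rfl fun e _ =>
              Finset.sum_congr rfl fun b _ => ?_
            rw [Finset.mul_sum]
            refine Finset.sum_congr rfl fun k _ => ?_
            rw [Finset.mul_sum]
            exact Finset.sum_congr rfl fun n _ => by ring
        _ = ∑ d, ∑ e, ∑ b,
              (∑ i, ∑ l, (∑ t, ΨX (t,l) (t,i)) * (F (i,j) (d,b) * Finv (d,e) (l,m))) *
              (if b = u ∧ s = e then (1:ℂ) else 0) := by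
            refine Finset.sum_congr rfl fun d _ => Finset.sum_congr rfl fun e _ =>
              Finset.sum_congr rfl fun b _ => ?_
            rw [hx1 b s e u]
        _ = ∑ d, ∑ i, ∑ l, (∑ t, ΨX (t,l) (t,i)) * (F (i,j) (d,u) * Finv (d,s) (l,m)) := by
            simp [ite_and, mul_ite, ite_mul, mul_zero, zero_mul, mul_one, one_mul,
              Finset.sum_ite_eq, Finset.sum_ite_eq']
    exact lhs_eq.symm.trans (main.trans rhs_eq)
  have A3 : ∀ s w m v : Fin N,
      ∑ u, (∑ t, ΨX (t,s) (t,u)) * ΨF (u,w) (m,v)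
        = ∑ l, Finv (w,s) (l,m) * (∑ t, ΨX (t,l) (t,v)) := by
    intro s w m v
    have main : ∑ u, ∑ j, ((if j = m then (1:ℂ) else 0) * (∑ t, ΨX (t,s) (t,u)))
            * ΨF (u,w) (j,v)
        = ∑ u, ∑ j, (∑ d, ∑ i, ∑ l,
            (∑ t, ΨX (t,l) (t,i)) * (F (i,j) (d,u) * Finv (d,s) (l,m))) * ΨF (u,w) (j,v) :=
      Finset.sum_congr rfl fun u _ => Finset.sum_congr rfl fun j _ => by
        rw [A2 j u s m]
    have lhs_eq : ∑ u, ∑ j, ((if j = m then (1:ℂ) else 0) * (∑ t, ΨX (t,s) (t,u)))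
            * ΨF (u,w) (j,v)
        = ∑ u, (∑ t, ΨX (t,s) (t,u)) * ΨF (u,w) (m,v) := by
      refine Finset.sum_congr rfl fun u _ => ?_
      simp [mul_ite, ite_mul, mul_zero, zero_mul, mul_one, one_mul,
        Finset.sum_ite_eq, Finset.sum_ite_eq']
    have rhs_eq : ∑ u, ∑ j, (∑ d, ∑ i, ∑ l,
            (∑ t, ΨX (t,l) (t,i)) * (F (i,j) (d,u) * Finv (d,s) (l,m))) * ΨF (u,w) (j,v)
        = ∑ l, Finv (w,s) (l,m) * (∑ t, ΨX (t,l) (t,v)) := by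
      calc ∑ u, ∑ j, (∑ d, ∑ i, ∑ l,
              (∑ t, ΨX (t,l) (t,i)) * (F (i,j) (d,u) * Finv (d,s) (l,m))) * ΨF (u,w) (j,v)
          = ∑ u, ∑ j, ∑ d, ∑ i, ∑ l,
              ((∑ t, ΨX (t,l) (t,i)) * (F (i,j) (d,u) * Finv (d,s) (l,m))) * ΨF (u,w) (j,v) := by
            refine Finset.sum_congr rfl fun u _ => Finset.sum_congr rfl fun j _ => ?_
            rw [Finset.sum_mul]
            refine Finset.sum_congr rfl fun d _ => ?_
            rw [Finset.sum_mul]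
            refine Finset.sum_congr rfl fun i _ => ?_
            rw [Finset.sum_mul]
        _ = ∑ l, ∑ d, ∑ i, ∑ j, ∑ u,
              ((∑ t, ΨX (t,l) (t,i)) * (F (i,j) (d,u) * Finv (d,s) (l,m))) * ΨF (u,w) (j,v) :=
            perm_ecdba _
        _ = ∑ l, ∑ d, ∑ i,
              ((∑ t, ΨX (t,l) (t,i)) * Finv (d,s) (l,m)) *
              (∑ j, ∑ u, F (i,j) (d,u) * ΨF (u,w) (j,v)) := by
            refine Finset.sum_congr rfl fun l _ => Finset.sum_congr rfl fun d _ =>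
              Finset.sum_congr rfl fun i _ => ?_
            rw [Finset.mul_sum]
            refine Finset.sum_congr rfl fun j _ => ?_
            rw [Finset.mul_sum]
            exact Finset.sum_congr rfl fun u _ => by ring
        _ = ∑ l, ∑ d, ∑ i,
              ((∑ t, ΨX (t,l) (t,i)) * Finv (d,s) (l,m)) *
              (if i = v ∧ w = d then (1:ℂ) else 0) := by
            refine Finset.sum_congr rfl fun l _ => Finset.sum_congr rfl fun d _ =>
              Finset.sum_congr rfl fun i _ => ?_
            rw [hf1 i w d v]
        _ = ∑ l, Finv (w,s) (l,m) * (∑ t, ΨX (t,l) (t,v)) := by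
            simp [ite_and, mul_ite, ite_mul, mul_zero, zero_mul, mul_one, one_mul,
              Finset.sum_ite_eq, Finset.sum_ite_eq', mul_comm]
    exact lhs_eq.symm.trans (main.trans rhs_eq)
  constructor
  · ext p q
    rw [leg1_mul_apply, swap_leg2_apply]
    simpa [trLeg1] using A3 p.1 p.2 q.1 q.2
  have B1 : ∀ i j l m : Fin N,
      (if i = l ∧ j = m then (1:ℂ) else 0)
        = ∑ fp, ∑ b, ∑ e, X (i,b) (l,e) *
            (∑ k, ∑ n, Finv (j,k) (b,fp) * F (e,fp) (m,n) * (∑ s, ΨX (n,s) (k,s))) := by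
    intro i j l m
    have main : ∑ k, ∑ n,
          (∑ b, ∑ fp, ∑ e, Finv (j,k) (b,fp) * X (i,b) (l,e) * F (e,fp) (m,n))
            * (∑ s, ΨX (n,s) (k,s))
        = ∑ k, ∑ n,
          (∑ b, ∑ d, ∑ e, F (i,j) (d,b) * X (b,k) (e,n) * Finv (d,e) (l,m))
            * (∑ s, ΨX (n,s) (k,s)) :=
      Finset.sum_congr rfl fun k _ => Finset.sum_congr rfl fun n _ => by
        rw [E1 i j k l m n]
    have side2 : ∑ k, ∑ n,
          (∑ b, ∑ d, ∑ e, F (i,j) (d,b) * X (b,k) (e,n) * Finv (d,e) (l,m))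
            * (∑ s, ΨX (n,s) (k,s))
        = (if i = l ∧ j = m then (1:ℂ) else 0) := by
      calc ∑ k, ∑ n,
            (∑ b, ∑ d, ∑ e, F (i,j) (d,b) * X (b,k) (e,n) * Finv (d,e) (l,m))
              * (∑ s, ΨX (n,s) (k,s))
          = ∑ k, ∑ n, ∑ b, ∑ d, ∑ e,
              (F (i,j) (d,b) * X (b,k) (e,n) * Finv (d,e) (l,m)) * (∑ s, ΨX (n,s) (k,s)) := by
            refine Finset.sum_congr rfl fun k _ => Finset.sum_congr rfl fun n _ => ?_
            rw [Finset.sum_mul]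
            refine Finset.sum_congr rfl fun b _ => ?_
            rw [Finset.sum_mul]
            refine Finset.sum_congr rfl fun d _ => ?_
            rw [Finset.sum_mul]
        _ = ∑ d, ∑ b, ∑ e, ∑ k, ∑ n,
              (F (i,j) (d,b) * X (b,k) (e,n) * Finv (d,e) (l,m)) * (∑ s, ΨX (n,s) (k,s)) :=
            perm_dceab _
        _ = ∑ d, ∑ b, ∑ e, (F (i,j) (d,b) * Finv (d,e) (l,m)) *
              (∑ k, ∑ n, X (b,k) (e,n) * (∑ s, ΨX (n,s) (k,s))) := by
            refine Finset.sum_congr rfl fun d _ => Finset.sum_congr rfl fun b _ =>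
              Finset.sum_congr rfl fun e _ => ?_
            rw [Finset.mul_sum]
            refine Finset.sum_congr rfl fun k _ => ?_
            rw [Finset.mul_sum]
            exact Finset.sum_congr rfl fun n _ => by ring
        _ = ∑ d, ∑ b, ∑ e, (F (i,j) (d,b) * Finv (d,e) (l,m)) *
              (if b = e then (1:ℂ) else 0) := by
            refine Finset.sum_congr rfl fun d _ => Finset.sum_congr rfl fun b _ =>
              Finset.sum_congr rfl fun e _ => ?_
            rw [P2 b e]
        _ = ∑ d, ∑ b, F (i,j) (d,b) * Finv (d,b) (l,m) := by
            simp [mul_ite, ite_mul, mul_zero, zero_mul, mul_one, one_mul,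
              Finset.sum_ite_eq, Finset.sum_ite_eq']
        _ = (if i = l ∧ j = m then (1:ℂ) else 0) := hfg i j l m
    have side1 : ∑ k, ∑ n,
          (∑ b, ∑ fp, ∑ e, Finv (j,k) (b,fp) * X (i,b) (l,e) * F (e,fp) (m,n))
            * (∑ s, ΨX (n,s) (k,s))
        = ∑ fp, ∑ b, ∑ e, X (i,b) (l,e) *
            (∑ k, ∑ n, Finv (j,k) (b,fp) * F (e,fp) (m,n) * (∑ s, ΨX (n,s) (k,s))) := by
      calc ∑ k, ∑ n,
            (∑ b, ∑ fp, ∑ e, Finv (j,k) (b,fp) * X (i,b) (l,e) * F (e,fp) (m,n))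
              * (∑ s, ΨX (n,s) (k,s))
          = ∑ k, ∑ n, ∑ b, ∑ fp, ∑ e,
              (Finv (j,k) (b,fp) * X (i,b) (l,e) * F (e,fp) (m,n)) * (∑ s, ΨX (n,s) (k,s)) := by
            refine Finset.sum_congr rfl fun k _ => Finset.sum_congr rfl fun n _ => ?_
            rw [Finset.sum_mul]
            refine Finset.sum_congr rfl fun b _ => ?_
            rw [Finset.sum_mul]
            refine Finset.sum_congr rfl fun fp _ => ?_
            rw [Finset.sum_mul]
        _ = ∑ fp, ∑ b, ∑ e, ∑ k, ∑ n,
              (Finv (j,k) (b,fp) * X (i,b) (l,e) * F (e,fp) (m,n)) * (∑ s, ΨX (n,s) (k,s)) :=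
            perm_dceab _
        _ = ∑ fp, ∑ b, ∑ e, X (i,b) (l,e) *
              (∑ k, ∑ n, Finv (j,k) (b,fp) * F (e,fp) (m,n) * (∑ s, ΨX (n,s) (k,s))) := by
            refine Finset.sum_congr rfl fun fp _ => Finset.sum_congr rfl fun b _ =>
              Finset.sum_congr rfl fun e _ => ?_
            rw [Finset.mul_sum]
            refine Finset.sum_congr rfl fun k _ => ?_
            rw [Finset.mul_sum]
            exact Finset.sum_congr rfl fun n _ => by ring
    exact side2.symm.trans (main.symm.trans side1)
  have B2 : ∀ o j o' m : Fin N,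
      (if j = m then (1:ℂ) else 0) * (∑ t, ΨX (o,t) (o',t))
        = ∑ k, ∑ fp, ∑ n, Finv (j,k) (o',fp) * F (o,fp) (m,n) * (∑ s, ΨX (n,s) (k,s)) := by
    intro o j o' m
    have main : ∑ l, ∑ i, ΨX (o,l) (o',i) * (if i = l ∧ j = m then (1:ℂ) else 0)
        = ∑ l, ∑ i, ΨX (o,l) (o',i) * (∑ fp, ∑ b, ∑ e, X (i,b) (l,e) *
            (∑ k, ∑ n, Finv (j,k) (b,fp) * F (e,fp) (m,n) * (∑ s, ΨX (n,s) (k,s)))) :=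
      Finset.sum_congr rfl fun l _ => Finset.sum_congr rfl fun i _ => by
        rw [← B1 i j l m]
    have lhs_eq : ∑ l, ∑ i, ΨX (o,l) (o',i) * (if i = l ∧ j = m then (1:ℂ) else 0)
        = (if j = m then (1:ℂ) else 0) * (∑ t, ΨX (o,t) (o',t)) := by
      by_cases h : j = m <;>
        simp [h, mul_ite, ite_mul, mul_zero, zero_mul, mul_one, one_mul,
          Finset.sum_ite_eq, Finset.sum_ite_eq', Finset.mul_sum]
    have rhs_eq : ∑ l, ∑ i, ΨX (o,l) (o',i) * (∑ fp, ∑ b, ∑ e, X (i,b) (l,e) *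
            (∑ k, ∑ n, Finv (j,k) (b,fp) * F (e,fp) (m,n) * (∑ s, ΨX (n,s) (k,s))))
        = ∑ k, ∑ fp, ∑ n, Finv (j,k) (o',fp) * F (o,fp) (m,n) * (∑ s, ΨX (n,s) (k,s)) := by
      calc ∑ l, ∑ i, ΨX (o,l) (o',i) * (∑ fp, ∑ b, ∑ e, X (i,b) (l,e) *
              (∑ k, ∑ n, Finv (j,k) (b,fp) * F (e,fp) (m,n) * (∑ s, ΨX (n,s) (k,s))))
          = ∑ l, ∑ i, ∑ fp, ∑ b, ∑ e, ΨX (o,l) (o',i) * (X (i,b) (l,e) *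
              (∑ k, ∑ n, Finv (j,k) (b,fp) * F (e,fp) (m,n) * (∑ s, ΨX (n,s) (k,s)))) := by
            refine Finset.sum_congr rfl fun l _ => Finset.sum_congr rfl fun i _ => ?_
            rw [Finset.mul_sum]
            refine Finset.sum_congr rfl fun fp _ => ?_
            rw [Finset.mul_sum]
            refine Finset.sum_congr rfl fun b _ => ?_
            rw [Finset.mul_sum]
        _ = ∑ fp, ∑ b, ∑ e, ∑ l, ∑ i, ΨX (o,l) (o',i) * (X (i,b) (l,e) *
              (∑ k, ∑ n, Finv (j,k) (b,fp) * F (e,fp) (m,n) * (∑ s, ΨX (n,s) (k,s)))) :=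
            perm_cdeab _
        _ = ∑ fp, ∑ b, ∑ e,
              (∑ k, ∑ n, Finv (j,k) (b,fp) * F (e,fp) (m,n) * (∑ s, ΨX (n,s) (k,s))) *
              (∑ l, ∑ i, ΨX (o,l) (o',i) * X (i,b) (l,e)) := by
            refine Finset.sum_congr rfl fun fp _ => Finset.sum_congr rfl fun b _ =>
              Finset.sum_congr rfl fun e _ => ?_
            rw [Finset.mul_sum]
            refine Finset.sum_congr rfl fun l _ => ?_
            rw [Finset.mul_sum]
            exact Finset.sum_congr rfl fun i _ => by ring
        _ = ∑ fp, ∑ b, ∑ e,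
              (∑ k, ∑ n, Finv (j,k) (b,fp) * F (e,fp) (m,n) * (∑ s, ΨX (n,s) (k,s))) *
              (if o = e ∧ b = o' then (1:ℂ) else 0) := by
            refine Finset.sum_congr rfl fun fp _ => Finset.sum_congr rfl fun b _ =>
              Finset.sum_congr rfl fun e _ => ?_
            rw [hx2 o b o' e]
        _ = ∑ fp, ∑ k, ∑ n, Finv (j,k) (o',fp) * F (o,fp) (m,n) * (∑ s, ΨX (n,s) (k,s)) := by
            simp [ite_and, mul_ite, ite_mul, mul_zero, zero_mul, mul_one, one_mul,
              Finset.sum_ite_eq, Finset.sum_ite_eq']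
        _ = ∑ k, ∑ fp, ∑ n, Finv (j,k) (o',fp) * F (o,fp) (m,n) * (∑ s, ΨX (n,s) (k,s)) :=
            Finset.sum_comm
    exact lhs_eq.symm.trans (main.trans rhs_eq)
  have B3 : ∀ v j w o' : Fin N,
      ∑ o, ΨF (v,j) (w,o) * (∑ t, ΨX (o,t) (o',t))
        = ∑ k, (∑ s, ΨX (v,s) (k,s)) * Finv (j,k) (o',w) := by
    intro v j w o'
    have main : ∑ o, ∑ m, ((if j = m then (1:ℂ) else 0) * (∑ t, ΨX (o,t) (o',t)))
            * ΨF (v,m) (w,o)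
        = ∑ o, ∑ m, (∑ k, ∑ fp, ∑ n,
            Finv (j,k) (o',fp) * F (o,fp) (m,n) * (∑ s, ΨX (n,s) (k,s))) * ΨF (v,m) (w,o) :=
      Finset.sum_congr rfl fun o _ => Finset.sum_congr rfl fun m _ => by
        rw [B2 o j o' m]
    have lhs_eq : ∑ o, ∑ m, ((if j = m then (1:ℂ) else 0) * (∑ t, ΨX (o,t) (o',t)))
            * ΨF (v,m) (w,o)
        = ∑ o, ΨF (v,j) (w,o) * (∑ t, ΨX (o,t) (o',t)) := by
      refine Finset.sum_congr rfl fun o _ => ?_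
      simp [mul_ite, ite_mul, mul_zero, zero_mul, mul_one, one_mul,
        Finset.sum_ite_eq, Finset.sum_ite_eq', mul_comm]
    have rhs_eq : ∑ o, ∑ m, (∑ k, ∑ fp, ∑ n,
            Finv (j,k) (o',fp) * F (o,fp) (m,n) * (∑ s, ΨX (n,s) (k,s))) * ΨF (v,m) (w,o)
        = ∑ k, (∑ s, ΨX (v,s) (k,s)) * Finv (j,k) (o',w) := by
      calc ∑ o, ∑ m, (∑ k, ∑ fp, ∑ n,
              Finv (j,k) (o',fp) * F (o,fp) (m,n) * (∑ s, ΨX (n,s) (k,s))) * ΨF (v,m) (w,o)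
          = ∑ o, ∑ m, ∑ k, ∑ fp, ∑ n,
              (Finv (j,k) (o',fp) * F (o,fp) (m,n) * (∑ s, ΨX (n,s) (k,s))) * ΨF (v,m) (w,o) := by
            refine Finset.sum_congr rfl fun o _ => Finset.sum_congr rfl fun m _ => ?_
            rw [Finset.sum_mul]
            refine Finset.sum_congr rfl fun k _ => ?_
            rw [Finset.sum_mul]
            refine Finset.sum_congr rfl fun fp _ => ?_
            rw [Finset.sum_mul]
        _ = ∑ k, ∑ fp, ∑ n, ∑ m, ∑ o,
              (Finv (j,k) (o',fp) * F (o,fp) (m,n) * (∑ s, ΨX (n,s) (k,s))) * ΨF (v,m) (w,o) :=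
            perm_cdeba _
        _ = ∑ k, ∑ fp, ∑ n,
              (Finv (j,k) (o',fp) * (∑ s, ΨX (n,s) (k,s))) *
              (∑ m, ∑ o, ΨF (v,m) (w,o) * F (o,fp) (m,n)) := by
            refine Finset.sum_congr rfl fun k _ => Finset.sum_congr rfl fun fp _ =>
              Finset.sum_congr rfl fun n _ => ?_
            rw [Finset.mul_sum]
            refine Finset.sum_congr rfl fun m _ => ?_
            rw [Finset.mul_sum]
            exact Finset.sum_congr rfl fun o _ => by ring
        _ = ∑ k, ∑ fp, ∑ n,
              (Finv (j,k) (o',fp) * (∑ s, ΨX (n,s) (k,s))) *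
              (if v = n ∧ fp = w then (1:ℂ) else 0) := by
            refine Finset.sum_congr rfl fun k _ => Finset.sum_congr rfl fun fp _ =>
              Finset.sum_congr rfl fun n _ => ?_
            rw [hf2 v fp w n]
        _ = ∑ k, (∑ s, ΨX (v,s) (k,s)) * Finv (j,k) (o',w) := by
            simp [ite_and, mul_ite, ite_mul, mul_zero, zero_mul, mul_one, one_mul,
              Finset.sum_ite_eq, Finset.sum_ite_eq', mul_comm]
    exact lhs_eq.symm.trans (main.trans rhs_eq)
  ext p q
  rw [mul_leg2_apply, leg1_mul_swap_apply]
  simpa [trLeg2] using B3 p.1 p.2 q.1 q.2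
end

section
/- Let R be a skew invertible R-matrix of BMW type on V⊗V with associated rank-one operator K and matrix D_R. Then K₁₂ (D_R)₁ (D_R)₂ = (D_R)₁ (D_R)₂ K₁₂ = μ² K₁₂. -/
section MyHelpers
open Matrix
variable {N : ℕ}

lemma my_mul_leg1_apply (M : TwoLeg N ℂ) (C : Matrix (Fin N) (Fin N) ℂ)
    (p : Fin N × Fin N) (k l : Fin N) :
    (M * leg1 C) p (k, l) = ∑ m, M p (m, l) * C m k := by
  simp [Matrix.mul_apply, leg1, Fintype.sum_prod_type, mul_ite, Finset.sum_ite_eq,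
    Finset.sum_ite_eq']

lemma my_mul_leg2_apply (M : TwoLeg N ℂ) (C : Matrix (Fin N) (Fin N) ℂ)
    (p : Fin N × Fin N) (k l : Fin N) :
    (M * leg2 C) p (k, l) = ∑ m, M p (k, m) * C m l := by
  simp [Matrix.mul_apply, leg2, Fintype.sum_prod_type, mul_ite, Finset.sum_ite_eq,
    Finset.sum_ite_eq']

lemma my_leg2_mul_apply (M : TwoLeg N ℂ) (C : Matrix (Fin N) (Fin N) ℂ)
    (i j : Fin N) (r : Fin N × Fin N) :
    (leg2 C * M) (i, j) r = ∑ m, C j m * M (i, m) r := by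
  simp [Matrix.mul_apply, leg2, Fintype.sum_prod_type, ite_mul, Finset.sum_ite_eq,
    Finset.sum_ite_eq']

end MyHelpers
section MyHelpers2
open Matrix
variable {N : ℕ}

lemma my_leg1_mul_leg2 (C C' : Matrix (Fin N) (Fin N) ℂ) :
    leg1 C * leg2 C' = leg2 C' * leg1 C := by
  ext ⟨i, j⟩ ⟨k, l⟩
  simp [Matrix.mul_apply, leg1, leg2, Fintype.sum_prod_type, mul_ite, ite_mul,
    Finset.sum_ite_eq, Finset.sum_ite_eq', mul_comm]

lemma my_trLeg2_mul_leg1 (M : TwoLeg N ℂ) (C : Matrix (Fin N) (Fin N) ℂ) :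
    trLeg2 (M * leg1 C) = trLeg2 M * C := by
  ext i k
  calc trLeg2 (M * leg1 C) i k = ∑ j, ∑ m, M (i, j) (m, j) * C m k :=
        Finset.sum_congr rfl fun j _ => my_mul_leg1_apply M C (i, j) k j
    _ = ∑ m, (∑ j, M (i, j) (m, j)) * C m k := by
        rw [Finset.sum_comm]; simp [Finset.sum_mul]
    _ = (trLeg2 M * C) i k := by simp [trLeg2, Matrix.mul_apply]

lemma my_trLeg2_leg2_comm (M : TwoLeg N ℂ) (C : Matrix (Fin N) (Fin N) ℂ) :
    trLeg2 (M * leg2 C) = trLeg2 (leg2 C * M) := by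
  ext i k
  show (∑ j, (M * leg2 C) (i, j) (k, j)) = (∑ j, (leg2 C * M) (i, j) (k, j))
  simp only [my_mul_leg2_apply, my_leg2_mul_apply]
  rw [Finset.sum_comm]
  exact Finset.sum_congr rfl fun m _ => Finset.sum_congr rfl fun j _ => mul_comm _ _

lemma my_trLeg2_smul (c : ℂ) (M : TwoLeg N ℂ) : trLeg2 (c • M) = c • trLeg2 M := by
  ext i k
  simp [trLeg2, Finset.mul_sum]

lemma my_rank_one {n : Type} [Fintype n] [DecidableEq n]
    (K : Matrix n n ℂ) (h : K.rank = 1) :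
    ∃ a b : n → ℂ, ∀ p q, K p q = a p * b q := by
  have h' : Module.finrank ℂ (LinearMap.range K.mulVecLin) = 1 := h
  rw [finrank_eq_one_iff'] at h'
  obtain ⟨⟨a, ha⟩, hv0, hv⟩ := h'
  choose c hc using fun q => hv ⟨K.mulVecLin (Pi.single q 1), LinearMap.mem_range_self _ _⟩
  refine ⟨a, c, fun p q => ?_⟩
  have h2 : c q • a = K.mulVecLin (Pi.single q 1) := congrArg Subtype.val (hc q)
  have h3 := congrFun h2 p
  simp only [Pi.smul_apply, smul_eq_mul, Matrix.mulVecLin_apply, Matrix.mulVec_single_one,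
    Matrix.col_apply, mul_one] at h3
  rw [← h3]; ring

end MyHelpers2
open Matrix

/-- For a skew invertible BMW type R-matrix `R` with rank-one operator `K`:
`K₁₂ (D_R)₁ (D_R)₂ = (D_R)₁ (D_R)₂ K₁₂ = μ² K₁₂`. -/
theorem bmw_rmatrix_K_DD_relation
    {N : ℕ} (q μ : ℂ) (R Rinv ΨR K : TwoLeg N ℂ)
    (hYB : leg12 R * leg23 R * leg12 R = leg23 R * leg12 R * leg23 R)
    (hRinv : R * Rinv = 1 ∧ Rinv * R = 1)
    (hΨ : IsSkewInverse R ΨR)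
    (hcubic : (q • (1 : TwoLeg N ℂ) - R) * (q⁻¹ • (1 : TwoLeg N ℂ) + R) *
      (μ • (1 : TwoLeg N ℂ) - R) = 0)
    (hK : K = (μ⁻¹ * (q - q⁻¹)⁻¹) •
      ((q • (1 : TwoLeg N ℂ) - R) * (q⁻¹ • (1 : TwoLeg N ℂ) + R)))
    (hKRp : leg23 K * leg12 K = leg12 R * leg23 R * leg12 K)
    (hKRm : leg23 K * leg12 K = leg12 Rinv * leg23 Rinv * leg12 K)
    (hKKK : leg12 K * leg23 K * leg12 K = leg12 K)
    (hrk : K.rank = 1)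
    (htrK : trLeg2 K = μ⁻¹ • trLeg2 ΨR)
    (htrDK : trLeg2 (leg2 (trLeg2 ΨR) * K) = μ • (1 : Matrix (Fin N) (Fin N) ℂ))
    (hRDD : R * (leg1 (trLeg2 ΨR) * leg2 (trLeg2 ΨR)) =
      leg1 (trLeg2 ΨR) * leg2 (trLeg2 ΨR) * R) :
    K * (leg1 (trLeg2 ΨR) * leg2 (trLeg2 ΨR)) = (μ ^ 2) • K ∧
    leg1 (trLeg2 ΨR) * leg2 (trLeg2 ΨR) * K = (μ ^ 2) • K := by

  classical
  set D := trLeg2 ΨR with hD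
  set X := leg1 D * leg2 D with hX
  have hμ : μ ≠ 0 := by
    intro h0
    rw [h0] at hK
    rw [show ((0:ℂ)⁻¹ * (q - q⁻¹)⁻¹) = 0 by simp, zero_smul] at hK
    rw [hK, Matrix.rank_zero] at hrk
    exact one_ne_zero hrk.symm
  -- K commutes with X
  have hcR : Commute R X := hRDD
  have hcomm : Commute K X := by
    rw [hK]
    exact ((((Commute.one_left X).smul_left q).sub_left hcR).mul_left
      (((Commute.one_left X).smul_left q⁻¹).add_left hcR)).smul_left _
  -- rank one decomposition
  obtain ⟨a, b, hab⟩ := my_rank_one K hrk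
  have hK0 : K ≠ 0 := by
    intro h; rw [h, Matrix.rank_zero] at hrk; exact one_ne_zero hrk.symm
  obtain ⟨p₀, q₀, hpq⟩ : ∃ p q, K p q ≠ 0 := by
    by_contra h; push_neg at h
    exact hK0 (by ext p q; simpa using h p q)
  have ha0 : a p₀ ≠ 0 := fun h => hpq (by rw [hab, h, zero_mul])
  have hb0 : b q₀ ≠ 0 := fun h => hpq (by rw [hab, h, mul_zero])
  have hKX : ∀ p r, (K * X) p r = a p * (∑ s, b s * X s r) := by
    intro p r
    rw [Matrix.mul_apply, Finset.mul_sum]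
    exact Finset.sum_congr rfl fun s _ => by rw [hab]; ring
  have hXK : ∀ p r, (X * K) p r = (∑ s, X p s * a s) * b r := by
    intro p r
    rw [Matrix.mul_apply, Finset.sum_mul]
    exact Finset.sum_congr rfl fun s _ => by rw [hab]; ring
  set lam := (a p₀)⁻¹ * (∑ s, X p₀ s * a s) with hlamdef
  have hE : ∀ p r, a p * (∑ s, b s * X s r) = (∑ s, X p s * a s) * b r := by
    intro p r; rw [← hKX, ← hXK, hcomm.eq]
  have hu : ∀ r, (∑ s, b s * X s r) = lam * b r := by
    intro r
    apply mul_left_cancel₀ ha0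
    rw [hE p₀ r, hlamdef]
    field_simp
  have hv : ∀ p, (∑ s, X p s * a s) = lam * a p := by
    intro p
    have h := hE p q₀
    rw [hu q₀] at h
    apply mul_right_cancel₀ hb0
    rw [← h]; ring
  have hKXlam : K * X = lam • K := by
    ext p r
    rw [hKX, hu]
    simp only [Matrix.smul_apply, smul_eq_mul, hab]
    ring
  -- compute trLeg2 (K * X) two ways
  have ht1 : trLeg2 (K * X) = (lam * μ⁻¹) • D := by
    rw [hKXlam, my_trLeg2_smul, htrK, smul_smul]
  have ht2 : trLeg2 (K * X) = μ • D := by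
    calc trLeg2 (K * X) = trLeg2 ((K * leg2 D) * leg1 D) := by
          rw [hX, my_leg1_mul_leg2, ← mul_assoc]
      _ = trLeg2 (K * leg2 D) * D := my_trLeg2_mul_leg1 _ _
      _ = trLeg2 (leg2 D * K) * D := by rw [my_trLeg2_leg2_comm]
      _ = (μ • (1 : Matrix (Fin N) (Fin N) ℂ)) * D := by rw [htrDK]
      _ = μ • D := by rw [Matrix.smul_mul, Matrix.one_mul]
  have hD0 : D ≠ 0 := by
    intro h
    have hz : leg2 D = 0 := by
      ext p r; simp [leg2, h]
    rw [hz, Matrix.zero_mul] at htrDK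
    have h1 : (0 : Matrix (Fin N) (Fin N) ℂ) = μ • 1 := by
      rw [← htrDK]; ext i j; simp [trLeg2]
    have h2 := congrFun (congrFun h1 p₀.1) p₀.1
    simp [Matrix.one_apply] at h2
    exact hμ h2.symm
  obtain ⟨i, j, hij⟩ : ∃ i j, D i j ≠ 0 := by
    by_contra h; push_neg at h
    exact hD0 (by ext i j; simpa using h i j)
  have hc := congrFun (congrFun (ht1.symm.trans ht2) i) j
  simp only [Matrix.smul_apply, smul_eq_mul] at hc
  have hlam : lam = μ ^ 2 := by
    have h2 : lam * μ⁻¹ = μ := mul_right_cancel₀ hij hc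
    have : lam = lam * μ⁻¹ * μ := by field_simp
    rw [this, h2]; ring
  rw [hlam] at hKXlam
  exact ⟨hKXlam, by rw [← hcomm.eq]; exact hKXlam⟩
end

section
/- In a quasitriangular Hopf algebra A with universal R-matrix R = a ⊗ b, let F = α ⊗ β be an invertible twisting element satisfying F₁₂·(Δ⊗id)(F) = F₂₃·(id⊗Δ)(F), (Δ⊗id)(F) = F₁₃F₂₃, and (id⊗Δ)(F) = F₁₃F₁₂. Then (S⊗S)(F) = F, the element ψ_F := α ⊗ S(β) is a two-sided skew inverse of F (i.e. inverse for the product (x⊗y)⊙(x'⊗y') = x'x ⊗ yy'), and F^{-1} = S(α) ⊗ β. -/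
open TensorProduct

noncomputable section

variable (A : Type) [Ring A] [HopfAlgebra ℂ A]

/-- The inclusion `A ⊗ A → A ⊗ A ⊗ A` on legs 1,2: `x ⊗ y ↦ x ⊗ y ⊗ 1`. -/
def ins12 : A ⊗[ℂ] A →ₗ[ℂ] A ⊗[ℂ] (A ⊗[ℂ] A) :=
  TensorProduct.map LinearMap.id ((TensorProduct.mk ℂ A A).flip 1)

/-- The inclusion on legs 2,3: `x ⊗ y ↦ 1 ⊗ x ⊗ y`. -/
def ins23 : A ⊗[ℂ] A →ₗ[ℂ] A ⊗[ℂ] (A ⊗[ℂ] A) :=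
  TensorProduct.mk ℂ A (A ⊗[ℂ] A) 1

/-- The inclusion on legs 1,3: `x ⊗ y ↦ x ⊗ 1 ⊗ y`. -/
def ins13 : A ⊗[ℂ] A →ₗ[ℂ] A ⊗[ℂ] (A ⊗[ℂ] A) :=
  TensorProduct.map LinearMap.id (TensorProduct.mk ℂ A A 1)

/-- `Δ ⊗ id`, reassociated: `A ⊗ A → A ⊗ (A ⊗ A)`. -/
def comulLeft : A ⊗[ℂ] A →ₗ[ℂ] A ⊗[ℂ] (A ⊗[ℂ] A) :=
  (TensorProduct.assoc ℂ A A A).toLinearMap ∘ₗ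
    LinearMap.rTensor A (Coalgebra.comul (R := ℂ) (A := A))

/-- `id ⊗ Δ : A ⊗ A → A ⊗ (A ⊗ A)`. -/
def comulRight : A ⊗[ℂ] A →ₗ[ℂ] A ⊗[ℂ] (A ⊗[ℂ] A) :=
  LinearMap.lTensor A (Coalgebra.comul (R := ℂ) (A := A))

/-- The linear equivalence `A ⊗ A ≃ Aᵐᵒᵖ ⊗ A` used to express the skew
product `(x⊗y) ⊙ (x'⊗y') = x'x ⊗ yy'` as the multiplication of `Aᵐᵒᵖ ⊗ A`. -/
def skewEquiv : A ⊗[ℂ] A ≃ₗ[ℂ] Aᵐᵒᵖ ⊗[ℂ] A :=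
  TensorProduct.congr (MulOpposite.opLinearEquiv ℂ) (LinearEquiv.refl ℂ A)

set_option maxHeartbeats 1000000

-- Auxiliary definitions and lemmas

def ins12A : A ⊗[ℂ] A →ₐ[ℂ] A ⊗[ℂ] (A ⊗[ℂ] A) :=
  Algebra.TensorProduct.map (AlgHom.id ℂ A) Algebra.TensorProduct.includeLeft
def ins13A : A ⊗[ℂ] A →ₐ[ℂ] A ⊗[ℂ] (A ⊗[ℂ] A) :=
  Algebra.TensorProduct.map (AlgHom.id ℂ A) Algebra.TensorProduct.includeRight
def ins23A : A ⊗[ℂ] A →ₐ[ℂ] A ⊗[ℂ] (A ⊗[ℂ] A) :=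
  Algebra.TensorProduct.includeRight
def cRA : A ⊗[ℂ] A →ₐ[ℂ] A ⊗[ℂ] (A ⊗[ℂ] A) :=
  Algebra.TensorProduct.map (AlgHom.id ℂ A) (Bialgebra.comulAlgHom ℂ A)

lemma ins12_eq : ins12 A = (ins12A A).toLinearMap := by
  apply TensorProduct.ext'; intro x y; simp [ins12, ins12A]
lemma ins13_eq : ins13 A = (ins13A A).toLinearMap := by
  apply TensorProduct.ext'; intro x y; simp [ins13, ins13A]
lemma ins23_eq : ins23 A = (ins23A A).toLinearMap := by
  apply TensorProduct.ext'; intro x y; simp [ins23, ins23A]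
lemma comulRight_eq : comulRight A = (cRA A).toLinearMap := by
  apply TensorProduct.ext'; intro x y
  simp [comulRight, cRA, Bialgebra.comulAlgHom]

def eps1L : A ⊗[ℂ] A →ₗ[ℂ] A :=
  (TensorProduct.lid ℂ A).toLinearMap ∘ₗ LinearMap.rTensor A (Coalgebra.counit (R := ℂ))
def eps2L : A ⊗[ℂ] A →ₗ[ℂ] A :=
  (TensorProduct.rid ℂ A).toLinearMap ∘ₗ LinearMap.lTensor A (Coalgebra.counit (R := ℂ))

def eps2A : A ⊗[ℂ] A →ₐ[ℂ] A :=
  (Algebra.TensorProduct.rid ℂ ℂ A).toAlgHom.comp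
    (Algebra.TensorProduct.map (AlgHom.id ℂ A) (Bialgebra.counitAlgHom ℂ A))
def E1A : A ⊗[ℂ] (A ⊗[ℂ] A) →ₐ[ℂ] A ⊗[ℂ] A :=
  (Algebra.TensorProduct.lid ℂ (A ⊗[ℂ] A)).toAlgHom.comp
    (Algebra.TensorProduct.map (Bialgebra.counitAlgHom ℂ A) (AlgHom.id ℂ (A ⊗[ℂ] A)))
def E3A : A ⊗[ℂ] (A ⊗[ℂ] A) →ₐ[ℂ] A ⊗[ℂ] A :=
  Algebra.TensorProduct.map (AlgHom.id ℂ A) (eps2A A)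

lemma eps2A_eq : (eps2A A).toLinearMap = eps2L A := by
  apply TensorProduct.ext'; intro x y
  simp [eps2A, eps2L, Bialgebra.counitAlgHom]

lemma eps1L_comul : eps1L A ∘ₗ Coalgebra.comul (R := ℂ) = LinearMap.id := by
  rw [eps1L, LinearMap.comp_assoc, Coalgebra.rTensor_counit_comp_comul]
  ext a; simp
lemma eps2L_comul : eps2L A ∘ₗ Coalgebra.comul (R := ℂ) = LinearMap.id := by
  rw [eps2L, LinearMap.comp_assoc, Coalgebra.lTensor_counit_comp_comul]
  ext a; simp

lemma E1_comulLeft : (E1A A).toLinearMap ∘ₗ comulLeft A = LinearMap.id := by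
  have h : (E1A A).toLinearMap ∘ₗ (TensorProduct.assoc ℂ A A A).toLinearMap
      = LinearMap.rTensor A (eps1L A) := by
    apply TensorProduct.ext_threefold; intro x y z
    simp [E1A, eps1L, Bialgebra.counitAlgHom, TensorProduct.smul_tmul']
  rw [comulLeft, ← LinearMap.comp_assoc, h, ← LinearMap.rTensor_comp, eps1L_comul,
    LinearMap.rTensor_id]

lemma E3_comulRight : (E3A A).toLinearMap ∘ₗ comulRight A = LinearMap.id := by
  have h : (E3A A).toLinearMap = LinearMap.lTensor A (eps2L A) := by
    apply TensorProduct.ext'; intro x y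
    simp [E3A, ← eps2A_eq]
  rw [comulRight, h, ← LinearMap.lTensor_comp, eps2L_comul, LinearMap.lTensor_id]

lemma E1_ins23 : (E1A A).toLinearMap ∘ₗ ins23 A = LinearMap.id := by
  apply TensorProduct.ext'; intro x y; simp [E1A, ins23, Bialgebra.counitAlgHom]
lemma E3_ins12 : (E3A A).toLinearMap ∘ₗ ins12 A = LinearMap.id := by
  apply TensorProduct.ext'; intro x y; simp [E3A, ins12, eps2A, Bialgebra.counitAlgHom]
lemma E1_ins13 : (E1A A).toLinearMap ∘ₗ ins13 A
    = TensorProduct.mk ℂ A A 1 ∘ₗ eps1L A := by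
  apply TensorProduct.ext'; intro x y
  simp [E1A, ins13, eps1L, Bialgebra.counitAlgHom, TensorProduct.smul_tmul']
lemma E3_ins13 : (E3A A).toLinearMap ∘ₗ ins13 A
    = (TensorProduct.mk ℂ A A).flip 1 ∘ₗ eps2L A := by
  apply TensorProduct.ext'; intro x y
  simp [E3A, ins13, eps2L, eps2A, Bialgebra.counitAlgHom, TensorProduct.smul_tmul']

def Sa : A →ₗ[ℂ] A := HopfAlgebra.antipode (R := ℂ)

def T1 : A ⊗[ℂ] (A ⊗[ℂ] A) →ₗ[ℂ] A ⊗[ℂ] A :=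
  LinearMap.rTensor A (LinearMap.mul' ℂ A ∘ₗ LinearMap.lTensor A (Sa A)) ∘ₗ
    (TensorProduct.assoc ℂ A A A).symm.toLinearMap

lemma T1_comulLeft : T1 A ∘ₗ comulLeft A
    = LinearMap.rTensor A (Algebra.linearMap ℂ A ∘ₗ Coalgebra.counit (R := ℂ)) := by
  rw [T1, comulLeft, LinearMap.comp_assoc, ← LinearMap.comp_assoc
    _ (TensorProduct.assoc ℂ A A A).toLinearMap, LinearEquiv.comp_coe,
    LinearEquiv.self_trans_symm, LinearEquiv.refl_toLinearMap, LinearMap.id_comp,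
    ← LinearMap.rTensor_comp, LinearMap.comp_assoc, Sa,
    HopfAlgebra.mul_antipode_lTensor_comul]

lemma key1 : ((LinearMap.mul ℂ (A ⊗[ℂ] (A ⊗[ℂ] A))).compl₁₂ (ins13 A) (ins23 A)).compr₂ (T1 A)
    = (LinearMap.mul ℂ (A ⊗[ℂ] A)).compl₂ (TensorProduct.map (Sa A) LinearMap.id) := by
  ext x y x' y'
  simp [T1, ins13, ins23, Algebra.TensorProduct.tmul_mul_tmul, LinearMap.mul'_apply]

def T4 : A ⊗[ℂ] (A ⊗[ℂ] A) →ₗ[ℂ] A ⊗[ℂ] A :=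
  LinearMap.lTensor A (LinearMap.mul' ℂ A ∘ₗ LinearMap.lTensor A (Sa A))
def T2 : A ⊗[ℂ] (A ⊗[ℂ] A) →ₗ[ℂ] Aᵐᵒᵖ ⊗[ℂ] A :=
  TensorProduct.map (MulOpposite.opLinearEquiv ℂ).toLinearMap
    (LinearMap.mul' ℂ A ∘ₗ LinearMap.rTensor A (Sa A))
def T3 : A ⊗[ℂ] (A ⊗[ℂ] A) →ₗ[ℂ] Aᵐᵒᵖ ⊗[ℂ] A :=
  TensorProduct.map (MulOpposite.opLinearEquiv ℂ).toLinearMap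
    (LinearMap.mul' ℂ A ∘ₗ LinearMap.lTensor A (Sa A))

lemma T4_comulRight : T4 A ∘ₗ comulRight A
    = LinearMap.lTensor A (Algebra.linearMap ℂ A ∘ₗ Coalgebra.counit (R := ℂ)) := by
  rw [T4, comulRight, ← LinearMap.lTensor_comp, LinearMap.comp_assoc, Sa,
    HopfAlgebra.mul_antipode_lTensor_comul]

lemma T2_comulRight : T2 A ∘ₗ comulRight A
    = TensorProduct.map (MulOpposite.opLinearEquiv ℂ).toLinearMap
      (Algebra.linearMap ℂ A ∘ₗ Coalgebra.counit (R := ℂ)) := by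
  have : comulRight A = TensorProduct.map (LinearMap.id (M := A))
      (Coalgebra.comul (R := ℂ)) := rfl
  rw [T2, this, ← TensorProduct.map_comp, LinearMap.comp_id, LinearMap.comp_assoc, Sa,
    HopfAlgebra.mul_antipode_rTensor_comul]

lemma T3_comulRight : T3 A ∘ₗ comulRight A
    = TensorProduct.map (MulOpposite.opLinearEquiv ℂ).toLinearMap
      (Algebra.linearMap ℂ A ∘ₗ Coalgebra.counit (R := ℂ)) := by
  have : comulRight A = TensorProduct.map (LinearMap.id (M := A))
      (Coalgebra.comul (R := ℂ)) := rfl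
  rw [T3, this, ← TensorProduct.map_comp, LinearMap.comp_id, LinearMap.comp_assoc, Sa,
    HopfAlgebra.mul_antipode_lTensor_comul]

lemma val1 : LinearMap.rTensor A (Algebra.linearMap ℂ A ∘ₗ Coalgebra.counit (R := ℂ))
    = TensorProduct.mk ℂ A A 1 ∘ₗ eps1L A := by
  apply TensorProduct.ext'; intro x y
  simp [eps1L, Algebra.linearMap, Algebra.algebraMap_eq_smul_one, smul_mul_assoc,
    mul_smul_comm, TensorProduct.smul_tmul', TensorProduct.tmul_smul]
lemma val2 : LinearMap.lTensor A (Algebra.linearMap ℂ A ∘ₗ Coalgebra.counit (R := ℂ))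
    = (TensorProduct.mk ℂ A A).flip 1 ∘ₗ eps2L A := by
  apply TensorProduct.ext'; intro x y
  simp [eps2L, Algebra.linearMap, Algebra.algebraMap_eq_smul_one, smul_mul_assoc,
    mul_smul_comm, TensorProduct.smul_tmul', TensorProduct.tmul_smul]
lemma val3 : TensorProduct.map (MulOpposite.opLinearEquiv ℂ).toLinearMap
      (Algebra.linearMap ℂ A ∘ₗ Coalgebra.counit (R := ℂ))
    = (TensorProduct.mk ℂ Aᵐᵒᵖ A).flip 1 ∘ₗ
        (MulOpposite.opLinearEquiv ℂ).toLinearMap ∘ₗ eps2L A := by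
  apply TensorProduct.ext'; intro x y
  simp [eps2L, Algebra.linearMap, Algebra.algebraMap_eq_smul_one, smul_mul_assoc,
    mul_smul_comm, TensorProduct.smul_tmul', TensorProduct.tmul_smul]

lemma key4 : ((LinearMap.mul ℂ (A ⊗[ℂ] (A ⊗[ℂ] A))).compl₁₂ (ins12 A) (ins13 A)).compr₂ (T4 A)
    = (LinearMap.mul ℂ (A ⊗[ℂ] A)).compl₂ (TensorProduct.map LinearMap.id (Sa A)) := by
  ext x y x' y'
  simp [T4, ins12, ins13, Algebra.TensorProduct.tmul_mul_tmul, LinearMap.mul'_apply]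

lemma key2 : ((LinearMap.mul ℂ (A ⊗[ℂ] (A ⊗[ℂ] A))).compl₁₂ (ins13 A) (ins12 A)).compr₂ (T2 A)
    = ((LinearMap.mul ℂ (Aᵐᵒᵖ ⊗[ℂ] A)).compl₁₂
        ((skewEquiv A).toLinearMap ∘ₗ TensorProduct.map LinearMap.id (Sa A))
        (skewEquiv A).toLinearMap).flip := by
  ext x y x' y'
  simp [T2, ins13, ins12, skewEquiv, Algebra.TensorProduct.tmul_mul_tmul,
    LinearMap.mul'_apply, MulOpposite.op_mul]

lemma key3 : ((LinearMap.mul ℂ (A ⊗[ℂ] (A ⊗[ℂ] A))).compl₁₂ (ins13 A) (ins12 A)).compr₂ (T3 A)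
    = ((LinearMap.mul ℂ (Aᵐᵒᵖ ⊗[ℂ] A)).compl₁₂
        (skewEquiv A).toLinearMap
        ((skewEquiv A).toLinearMap ∘ₗ TensorProduct.map LinearMap.id (Sa A))).flip := by
  ext x y x' y'
  simp [T3, ins13, ins12, skewEquiv, Algebra.TensorProduct.tmul_mul_tmul,
    LinearMap.mul'_apply, MulOpposite.op_mul]


/-- For an invertible twisting element `F = α ⊗ β` of a quasitriangular Hopf
algebra satisfying the cocycle and hexagon conditions, one has
`(S ⊗ S)(F) = F`, `ψ_F = α ⊗ S(β)` is a two-sided skew inverse of `F`, and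
`F⁻¹ = S(α) ⊗ β`. -/
theorem twisting_element_antipode_properties
    (Rm Rinv : A ⊗[ℂ] A)
    (hR1 : Rm * Rinv = 1) (hR2 : Rinv * Rm = 1)
    (hRqt : ∀ x : A, (TensorProduct.comm ℂ A A) (Coalgebra.comul x) * Rm =
      Rm * Coalgebra.comul x)
    (hRhex1 : comulLeft A Rm = ins13 A Rm * ins23 A Rm)
    (hRhex2 : comulRight A Rm = ins13 A Rm * ins12 A Rm)
    (Fm Finv : A ⊗[ℂ] A)
    (hF1 : Fm * Finv = 1) (hF2 : Finv * Fm = 1)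
    (hFcoc : ins12 A Fm * comulLeft A Fm = ins23 A Fm * comulRight A Fm)
    (hFhex1 : comulLeft A Fm = ins13 A Fm * ins23 A Fm)
    (hFhex2 : comulRight A Fm = ins13 A Fm * ins12 A Fm) :
    TensorProduct.map (HopfAlgebra.antipode (R := ℂ)) (HopfAlgebra.antipode (R := ℂ)) Fm
        = Fm ∧
    skewEquiv A (TensorProduct.map LinearMap.id (HopfAlgebra.antipode (R := ℂ)) Fm) *
        skewEquiv A Fm = 1 ∧
    skewEquiv A Fm *
        skewEquiv A (TensorProduct.map LinearMap.id (HopfAlgebra.antipode (R := ℂ)) Fm)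
        = 1 ∧
    Finv = TensorProduct.map (HopfAlgebra.antipode (R := ℂ)) LinearMap.id Fm := by
  -- multiplicativity facts
  have hmul12 : ∀ u v : A ⊗[ℂ] A, ins12 A (u * v) = ins12 A u * ins12 A v := by
    intro u v; rw [ins12_eq]; simp only [AlgHom.toLinearMap_apply]; exact map_mul _ _ _
  have hmul13 : ∀ u v : A ⊗[ℂ] A, ins13 A (u * v) = ins13 A u * ins13 A v := by
    intro u v; rw [ins13_eq]; simp only [AlgHom.toLinearMap_apply]; exact map_mul _ _ _
  have hone12 : ins12 A 1 = 1 := by rw [ins12_eq]; simp only [AlgHom.toLinearMap_apply]; exact map_one _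
  have hone13 : ins13 A 1 = 1 := by rw [ins13_eq]; simp only [AlgHom.toLinearMap_apply]; exact map_one _
  have hcRmul : ∀ u v : A ⊗[ℂ] A, comulRight A (u * v) = comulRight A u * comulRight A v := by
    intro u v; rw [comulRight_eq]; simp only [AlgHom.toLinearMap_apply]; exact map_mul _ _ _
  have hcRone : comulRight A 1 = 1 := by rw [comulRight_eq]; simp only [AlgHom.toLinearMap_apply]; exact map_one _
  have heps2mul : ∀ u v : A ⊗[ℂ] A, eps2L A (u * v) = eps2L A u * eps2L A v := by
    intro u v; rw [← eps2A_eq]; simp only [AlgHom.toLinearMap_apply]; exact map_mul _ _ _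
  -- eps1L Fm = 1
  have heps1 : eps1L A Fm = 1 := by
    have h := congrArg (E1A A) hFhex1
    rw [map_mul] at h
    have a1 : E1A A (comulLeft A Fm) = Fm := by
      simpa using LinearMap.congr_fun (E1_comulLeft A) Fm
    have a2 : E1A A (ins13 A Fm) = (1 : A) ⊗ₜ[ℂ] eps1L A Fm := by
      simpa using LinearMap.congr_fun (E1_ins13 A) Fm
    have a3 : E1A A (ins23 A Fm) = Fm := by
      simpa using LinearMap.congr_fun (E1_ins23 A) Fm
    rw [a1, a2, a3] at h
    have h2 : (1 : A) ⊗ₜ[ℂ] eps1L A Fm = 1 := by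
      calc (1 : A) ⊗ₜ[ℂ] eps1L A Fm = ((1 : A) ⊗ₜ[ℂ] eps1L A Fm) * (Fm * Finv) := by
            rw [hF1, mul_one]
        _ = Fm * Finv := by rw [← mul_assoc, ← h]
        _ = 1 := hF1
    have := congrArg (eps1L A) h2
    simpa [eps1L, Algebra.TensorProduct.one_def] using this
  -- eps2L Fm = 1
  have heps2 : eps2L A Fm = 1 := by
    have h := congrArg (E3A A) hFhex2
    rw [map_mul] at h
    have a1 : E3A A (comulRight A Fm) = Fm := by
      simpa using LinearMap.congr_fun (E3_comulRight A) Fm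
    have a2 : E3A A (ins13 A Fm) = eps2L A Fm ⊗ₜ[ℂ] (1 : A) := by
      simpa using LinearMap.congr_fun (E3_ins13 A) Fm
    have a3 : E3A A (ins12 A Fm) = Fm := by
      simpa using LinearMap.congr_fun (E3_ins12 A) Fm
    rw [a1, a2, a3] at h
    have h2 : eps2L A Fm ⊗ₜ[ℂ] (1 : A) = 1 := by
      calc eps2L A Fm ⊗ₜ[ℂ] (1 : A) = (eps2L A Fm ⊗ₜ[ℂ] (1 : A)) * (Fm * Finv) := by
            rw [hF1, mul_one]
        _ = Fm * Finv := by rw [← mul_assoc, ← h]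
        _ = 1 := hF1
    have := congrArg (eps2L A) h2
    simpa [eps2L, Algebra.TensorProduct.one_def] using this
  have heps2inv : eps2L A Finv = 1 := by
    have h := heps2mul Finv Fm
    rw [hF2, heps2, mul_one] at h
    rw [← h, Algebra.TensorProduct.one_def]
    simp [eps2L]
  -- I1 : Fm * (S ⊗ id) Fm = 1
  have I1 : Fm * TensorProduct.map (Sa A) LinearMap.id Fm = 1 := by
    have k1 : T1 A (ins13 A Fm * ins23 A Fm)
        = Fm * TensorProduct.map (Sa A) LinearMap.id Fm := by
      simpa using LinearMap.congr_fun (LinearMap.congr_fun (key1 A) Fm) Fm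
    have k2 : T1 A (comulLeft A Fm) = 1 := by
      have h := LinearMap.congr_fun (T1_comulLeft A) Fm
      rw [val1] at h
      simp only [LinearMap.comp_apply] at h ⊢
      rw [h, heps1]
      simp [Algebra.TensorProduct.one_def]
    rw [← k1, ← hFhex1, k2]
  -- I2 : Finv = (S ⊗ id) Fm
  have I2 : Finv = TensorProduct.map (Sa A) LinearMap.id Fm := by
    calc Finv = Finv * (Fm * TensorProduct.map (Sa A) LinearMap.id Fm) := by
          rw [I1, mul_one]
      _ = (Finv * Fm) * TensorProduct.map (Sa A) LinearMap.id Fm := by rw [mul_assoc]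
      _ = TensorProduct.map (Sa A) LinearMap.id Fm := by rw [hF2, one_mul]
  -- conjunct b
  have Ib : skewEquiv A (TensorProduct.map LinearMap.id (Sa A) Fm) * skewEquiv A Fm = 1 := by
    have k1 : T2 A (ins13 A Fm * ins12 A Fm)
        = skewEquiv A (TensorProduct.map LinearMap.id (Sa A) Fm) * skewEquiv A Fm := by
      simpa using LinearMap.congr_fun (LinearMap.congr_fun (key2 A) Fm) Fm
    have k2 : T2 A (comulRight A Fm) = 1 := by
      have h := LinearMap.congr_fun (T2_comulRight A) Fm
      rw [val3] at h
      simp only [LinearMap.comp_apply] at h ⊢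
      rw [h, heps2]
      simp [Algebra.TensorProduct.one_def]
    rw [← k1, ← hFhex2, k2]
  -- conjunct c
  have Ic : skewEquiv A Fm * skewEquiv A (TensorProduct.map LinearMap.id (Sa A) Fm) = 1 := by
    have k1 : T3 A (ins13 A Fm * ins12 A Fm)
        = skewEquiv A Fm * skewEquiv A (TensorProduct.map LinearMap.id (Sa A) Fm) := by
      simpa using LinearMap.congr_fun (LinearMap.congr_fun (key3 A) Fm) Fm
    have k2 : T3 A (comulRight A Fm) = 1 := by
      have h := LinearMap.congr_fun (T3_comulRight A) Fm
      rw [val3] at h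
      simp only [LinearMap.comp_apply] at h ⊢
      rw [h, heps2]
      simp [Algebra.TensorProduct.one_def]
    rw [← k1, ← hFhex2, k2]
  -- inverse hexagon
  have hhexinv : comulRight A Finv = ins12 A Finv * ins13 A Finv := by
    have hXY : (ins13 A Fm * ins12 A Fm) * (ins12 A Finv * ins13 A Finv) = 1 := by
      calc (ins13 A Fm * ins12 A Fm) * (ins12 A Finv * ins13 A Finv)
          = ins13 A Fm * (ins12 A Fm * ins12 A Finv) * ins13 A Finv := by
            rw [mul_assoc, mul_assoc, mul_assoc]
        _ = ins13 A Fm * ins13 A Finv := by rw [← hmul12, hF1, hone12, mul_one]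
        _ = 1 := by rw [← hmul13, hF1, hone13]
    calc comulRight A Finv
        = comulRight A Finv * ((ins13 A Fm * ins12 A Fm) * (ins12 A Finv * ins13 A Finv)) := by
          rw [hXY, mul_one]
      _ = (comulRight A Finv * comulRight A Fm) * (ins12 A Finv * ins13 A Finv) := by
          rw [← hFhex2, mul_assoc]
      _ = ins12 A Finv * ins13 A Finv := by rw [← hcRmul, hF2, hcRone, one_mul]
  -- I3 : Finv * (id ⊗ S) Finv = 1
  have I3 : Finv * TensorProduct.map LinearMap.id (Sa A) Finv = 1 := by
    have k1 : T4 A (ins12 A Finv * ins13 A Finv)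
        = Finv * TensorProduct.map LinearMap.id (Sa A) Finv := by
      simpa using LinearMap.congr_fun (LinearMap.congr_fun (key4 A) Finv) Finv
    have k2 : T4 A (comulRight A Finv) = 1 := by
      have h := LinearMap.congr_fun (T4_comulRight A) Finv
      rw [val2] at h
      simp only [LinearMap.comp_apply] at h ⊢
      rw [h, heps2inv]
      simp [Algebra.TensorProduct.one_def]
    rw [← k1, ← hhexinv, k2]
  have I4 : TensorProduct.map LinearMap.id (Sa A) Finv = Fm := by
    calc TensorProduct.map LinearMap.id (Sa A) Finv
        = (Fm * Finv) * TensorProduct.map LinearMap.id (Sa A) Finv := by rw [hF1, one_mul]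
      _ = Fm * (Finv * TensorProduct.map LinearMap.id (Sa A) Finv) := by rw [mul_assoc]
      _ = Fm := by rw [I3, mul_one]
  -- conjunct a
  have Ia : TensorProduct.map (Sa A) (Sa A) Fm = Fm := by
    have hcomp : TensorProduct.map (Sa A) (Sa A)
        = TensorProduct.map LinearMap.id (Sa A) ∘ₗ TensorProduct.map (Sa A) LinearMap.id := by
      rw [← TensorProduct.map_comp, LinearMap.id_comp, LinearMap.comp_id]
    rw [hcomp, LinearMap.comp_apply, ← I2, I4]
  exact ⟨Ia, Ib, Ic, I2⟩


end
end
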